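/- arXiv:1701.06663 — 2 statements merged into one kernel-verified Lean document; each statement's English description precedes it below -/
import Mathlib

section
/- (1) Let (μ_n, S_n, L_n, π_n)_{n≥1} be a family of irreducible and reversible continuous-time finite Markov chains with liminf_n ∑_x μ_n(x)²/π_n(x) > 1. Then the family has an L²-cutoff if and only if it has an L²-pre-cutoff. (2) Let (μ_n, S_n, K_n, π_n)_{n≥1} be a family of irreducible and reversible discrete-time finite Markov chains such that liminf_n ∑_x (μ_nK_n)(x)²/π_n(x) > 1 and T_{n,2}(μ_n, ε₀) → ∞ for some ε₀ ∈ (0,∞). Then the family has an L²-cutoff if and only if it has an L²-pre-cutoff. -/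
open MeasureTheory Filter Set Topology

/-- The `L²`-distance `d₂(μ,t)` of a continuous-time chain on a finite set `S` with generator
`L`, initial distribution `μ` and stationary distribution `π`:
`d₂(μ,t) = (∑_y |μ e^{tL}(y)/π(y) − 1|² π(y))^{1/2}`. -/
noncomputable def d2ct {S : Type*} [Fintype S] [DecidableEq S]
    (L : Matrix S S ℝ) (μ π : S → ℝ) (t : ℝ) : ℝ :=
  Real.sqrt (∑ y, ((∑ x, μ x * NormedSpace.exp (t • L) x y) / π y - 1) ^ 2 * π y)

/-- The `L²`-distance `d₂(μ,m)` of a discrete-time chain with transition matrix `K`. -/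
noncomputable def d2dt {S : Type*} [Fintype S] [DecidableEq S]
    (K : Matrix S S ℝ) (μ π : S → ℝ) (m : ℕ) : ℝ :=
  Real.sqrt (∑ y, ((∑ x, μ x * (K ^ m) x y) / π y - 1) ^ 2 * π y)

/-- The `L²`-mixing time `T₂(μ,ε) = min{t ≥ 0 : d₂(μ,t) ≤ ε}` (continuous time). -/
noncomputable def Tmix2ct {S : Type*} [Fintype S] [DecidableEq S]
    (L : Matrix S S ℝ) (μ π : S → ℝ) (ε : ℝ) : ℝ :=
  sInf {t : ℝ | 0 ≤ t ∧ d2ct L μ π t ≤ ε}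

/-- The `L²`-mixing time `T₂(μ,ε) = min{m ≥ 0 : d₂(μ,m) ≤ ε}` (discrete time). -/
noncomputable def Tmix2dt {S : Type*} [Fintype S] [DecidableEq S]
    (K : Matrix S S ℝ) (μ π : S → ℝ) (ε : ℝ) : ℕ :=
  sInf {m : ℕ | d2dt K μ π m ≤ ε}

/-- `t` is an `L²`-cutoff time for a family of continuous-time chains with `L²`-distances
`d n ·`: for all `a ∈ (0,1)`, `d n ((1+a) t_n) → 0` and `d n ((1−a) t_n) → ∞`. -/
def IsCutoffTimeCT (d : ℕ → ℝ → ℝ) (t : ℕ → ℝ) : Prop :=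
  (∀ᶠ n in atTop, 0 < t n) ∧ ∀ a ∈ Ioo (0 : ℝ) 1,
    Tendsto (fun n => d n ((1 + a) * t n)) atTop (𝓝 0) ∧
      Tendsto (fun n => d n ((1 - a) * t n)) atTop atTop

/-- A family of continuous-time chains with `L²`-distances `d n ·` has an `L²`-cutoff. -/
def HasCutoffCT (d : ℕ → ℝ → ℝ) : Prop :=
  ∃ t : ℕ → ℝ, IsCutoffTimeCT d t

/-- `t` is an `L²`-cutoff time for a family of discrete-time chains with `L²`-distances
`d n ·`: for all `a ∈ (0,1)`, `d n ⌈(1+a) t_n⌉ → 0` and `d n ⌊(1−a) t_n⌋ → ∞`. -/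
def IsCutoffTimeDT (d : ℕ → ℕ → ℝ) (t : ℕ → ℝ) : Prop :=
  (∀ᶠ n in atTop, 0 < t n) ∧ ∀ a ∈ Ioo (0 : ℝ) 1,
    Tendsto (fun n => d n ⌈(1 + a) * t n⌉₊) atTop (𝓝 0) ∧
      Tendsto (fun n => d n ⌊(1 - a) * t n⌋₊) atTop atTop

/-- A family of discrete-time chains with `L²`-distances `d n ·` has an `L²`-cutoff. -/
def HasCutoffDT (d : ℕ → ℕ → ℝ) : Prop :=
  ∃ t : ℕ → ℝ, IsCutoffTimeDT d t

/-- A continuous-time generator matrix: nonnegative off-diagonal entries and zero row sums. -/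
def IsGenerator {S : Type*} [Fintype S] (L : Matrix S S ℝ) : Prop :=
  (∀ x y, x ≠ y → 0 ≤ L x y) ∧ ∀ x, ∑ y, L x y = 0

/-- A stochastic matrix: nonnegative entries and unit row sums. -/
def IsStochastic {S : Type*} [Fintype S] (K : Matrix S S ℝ) : Prop :=
  (∀ x y, 0 ≤ K x y) ∧ ∀ x, ∑ y, K x y = 1

/-- Irreducibility of a generator matrix: any two distinct states are connected by a path of
transitions with positive rate. -/
def GenIrreducible {S : Type*} [Fintype S] (L : Matrix S S ℝ) : Prop :=
  ∀ x y : S, x ≠ y → ∃ (m : ℕ) (f : Fin (m + 1) → S),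
    f 0 = x ∧ f (Fin.last m) = y ∧ ∀ i : Fin m, 0 < L (f i.castSucc) (f i.succ)

/-- Irreducibility of a stochastic matrix. -/
def MatIrreducible {S : Type*} [Fintype S] [DecidableEq S] (K : Matrix S S ℝ) : Prop :=
  ∀ x y : S, ∃ m : ℕ, 0 < (K ^ m) x y

/-- `μ` is a probability vector. -/
def IsProb {S : Type*} [Fintype S] (μ : S → ℝ) : Prop :=
  (∀ x, 0 ≤ μ x) ∧ ∑ x, μ x = 1

/-- Reversibility of the matrix `M` with respect to `π`. -/
def Reversible {S : Type*} [Fintype S] (M : Matrix S S ℝ) (π : S → ℝ) : Prop :=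
  ∀ x y, π x * M x y = π y * M y x

/-- `w i = |μ(φ_i)|²`, the squared `φ_i`-coefficient of the initial distribution `μ`. -/
noncomputable def wcoef {S : Type*} [Fintype S] (μ : S → ℝ) (φ : ℕ → S → ℝ) (i : ℕ) : ℝ :=
  (∑ x, μ x * φ i x) ^ 2

/-- `j(c) = min{ j ≥ 1 : ∑_{i=1}^j w i > c }` (indices below `card`). -/
noncomputable def jSpec (card : ℕ) (w : ℕ → ℝ) (c : ℝ) : ℕ :=
  sInf {j : ℕ | 1 ≤ j ∧ j < card ∧ c < ∑ i ∈ Finset.Icc 1 j, w i}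

/-- `τ(c) = max_{j(c) ≤ j < card} log(1 + ∑_{i=1}^j w i) / (2 λ_j)`. -/
noncomputable def tauSpec (card : ℕ) (w lam : ℕ → ℝ) (c : ℝ) : ℝ :=
  sSup ((fun j => Real.log (1 + ∑ i ∈ Finset.Icc 1 j, w i) / (2 * lam j)) ''
    {j : ℕ | jSpec card w c ≤ j ∧ j < card})

open scoped ENNReal

/-- A family of continuous-time chains with `L²`-distances `d n ·` has an `L²`-pre-cutoff:
for some positive `t_n` and `0 < A < B`, `d n (B t_n) → 0` and `liminf_n d n (A t_n) > 0`. -/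
def HasPreCutoffCT (d : ℕ → ℝ → ℝ) : Prop :=
  ∃ (t : ℕ → ℝ) (A B : ℝ), 0 < A ∧ A < B ∧ (∀ᶠ n in atTop, 0 < t n) ∧
    Tendsto (fun n => d n (B * t n)) atTop (𝓝 0) ∧
    0 < Filter.liminf (fun n => ENNReal.ofReal (d n (A * t n))) atTop

/-- A family of discrete-time chains with `L²`-distances `d n ·` has an `L²`-pre-cutoff:
for some positive `t_n` and `0 < A < B`, `d n ⌈B t_n⌉ → 0` and `liminf_n d n ⌊A t_n⌋ > 0`. -/
def HasPreCutoffDT (d : ℕ → ℕ → ℝ) : Prop :=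
  ∃ (t : ℕ → ℝ) (A B : ℝ), 0 < A ∧ A < B ∧ (∀ᶠ n in atTop, 0 < t n) ∧
    Tendsto (fun n => d n ⌈B * t n⌉₊) atTop (𝓝 0) ∧
    0 < Filter.liminf (fun n => ENNReal.ofReal (d n ⌊A * t n⌋₊)) atTop



/-- A finite nonnegative mixture of decaying exponentials. -/
def ExpMix (F : ℝ → ℝ) : Prop :=
  ∃ (ι : Type) (_ : Fintype ι) (w lam : ι → ℝ),
    (∀ i, 0 ≤ w i) ∧ (∀ i, 0 ≤ lam i) ∧
    ∀ t : ℝ, F t = ∑ i, w i * Real.exp (-(lam i * t))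

lemma ExpMix.nonneg {F : ℝ → ℝ} (hF : ExpMix F) (t : ℝ) : 0 ≤ F t := by
  obtain ⟨ι, _, w, lam, hw, _, hrep⟩ := hF
  rw [hrep]
  exact Finset.sum_nonneg fun i _ => mul_nonneg (hw i) (Real.exp_nonneg _)

lemma ExpMix.continuous {F : ℝ → ℝ} (hF : ExpMix F) : Continuous F := by
  obtain ⟨ι, _, w, lam, hw, hl, hrep⟩ := hF
  have : F = fun t => ∑ i, w i * Real.exp (-(lam i * t)) := funext hrep
  rw [this]
  exact continuous_finset_sum _ fun i _ => by fun_prop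

lemma ExpMix.antitone {F : ℝ → ℝ} (hF : ExpMix F) : Antitone F := by
  obtain ⟨ι, _, w, lam, hw, hl, hrep⟩ := hF
  intro s t hst
  rw [hrep, hrep]
  refine Finset.sum_le_sum fun i _ => ?_
  refine mul_le_mul_of_nonneg_left (Real.exp_le_exp.2 ?_) (hw i)
  have := mul_le_mul_of_nonneg_left hst (hl i)
  linarith

lemma ExpMix.pos {F : ℝ → ℝ} (hF : ExpMix F) {x₀ : ℝ} (h0 : 0 < F x₀) (x : ℝ) : 0 < F x := by
  obtain ⟨ι, _, w, lam, hw, hl, hrep⟩ := hF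
  rw [hrep] at h0 ⊢
  have hex : ∃ i ∈ Finset.univ, 0 < w i * Real.exp (-(lam i * x₀)) := by
    by_contra h
    push_neg at h
    have : ∑ i, w i * Real.exp (-(lam i * x₀)) ≤ 0 := Finset.sum_nonpos fun i hi => h i hi
    linarith
  obtain ⟨i, _, hi⟩ := hex
  have hwi : 0 < w i := by
    by_contra hwi
    push_neg at hwi
    nlinarith [Real.exp_pos (-(lam i * x₀))]
  calc (0:ℝ) < w i * Real.exp (-(lam i * x)) := mul_pos hwi (Real.exp_pos _)
    _ ≤ ∑ j, w j * Real.exp (-(lam j * x)) :=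
        Finset.single_le_sum (f := fun j => w j * Real.exp (-(lam j * x)))
          (fun j _ => mul_nonneg (hw j) (Real.exp_nonneg _)) (Finset.mem_univ i)

private lemma lowmass {ι : Type} [Fintype ι] (w lam : ι → ℝ) (hw : ∀ i, 0 ≤ w i)
    (hl : ∀ i, 0 ≤ lam i) {θ s y : ℝ} (hθ : 0 ≤ θ) (hs : 0 ≤ s) (hy : 0 ≤ y) :
    ∑ i ∈ Finset.univ.filter (fun i => lam i ≤ θ), w i * Real.exp (-(lam i * s))
      ≤ Real.exp (θ * y) * ∑ i, w i * Real.exp (-(lam i * y)) := by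
  calc ∑ i ∈ Finset.univ.filter (fun i => lam i ≤ θ), w i * Real.exp (-(lam i * s))
      ≤ ∑ i ∈ Finset.univ.filter (fun i => lam i ≤ θ),
          Real.exp (θ * y) * (w i * Real.exp (-(lam i * y))) := by
        refine Finset.sum_le_sum fun i hi => ?_
        have hiθ : lam i ≤ θ := (Finset.mem_filter.1 hi).2
        have hexp : Real.exp (-(lam i * s)) ≤ Real.exp (θ * y) * Real.exp (-(lam i * y)) := by
          rw [← Real.exp_add]
          apply Real.exp_le_exp.2
          nlinarith [mul_nonneg (sub_nonneg.2 hiθ) hy, mul_nonneg (hl i) hs]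
        calc w i * Real.exp (-(lam i * s))
            ≤ w i * (Real.exp (θ * y) * Real.exp (-(lam i * y))) :=
              mul_le_mul_of_nonneg_left hexp (hw i)
          _ = Real.exp (θ * y) * (w i * Real.exp (-(lam i * y))) := by ring
    _ ≤ ∑ i, Real.exp (θ * y) * (w i * Real.exp (-(lam i * y))) :=
        Finset.sum_le_sum_of_subset_of_nonneg (Finset.filter_subset _ _)
          (fun i _ _ => mul_nonneg (Real.exp_nonneg _)
            (mul_nonneg (hw i) (Real.exp_nonneg _)))
    _ = Real.exp (θ * y) * ∑ i, w i * Real.exp (-(lam i * y)) := by rw [Finset.mul_sum]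

lemma ExpMix.split_upper {F : ℝ → ℝ} (hF : ExpMix F) {θ s x y : ℝ}
    (hθ : 0 ≤ θ) (hs : 0 ≤ s) (hsx : s ≤ x) (hy : 0 ≤ y) :
    F x ≤ Real.exp (θ * y) * F y + Real.exp (-(θ * (x - s))) * F s := by
  obtain ⟨ι, _, w, lam, hw, hl, hrep⟩ := hF
  rw [hrep, hrep, hrep]
  classical
  rw [← Finset.sum_filter_add_sum_filter_not Finset.univ (fun i => lam i ≤ θ)
    (fun i => w i * Real.exp (-(lam i * x)))]
  refine add_le_add ?_ ?_
  · calc ∑ i ∈ Finset.univ.filter (fun i => lam i ≤ θ), w i * Real.exp (-(lam i * x))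
        ≤ ∑ i ∈ Finset.univ.filter (fun i => lam i ≤ θ), w i * Real.exp (-(lam i * s)) := by
          refine Finset.sum_le_sum fun i _ => ?_
          refine mul_le_mul_of_nonneg_left (Real.exp_le_exp.2 ?_) (hw i)
          have := mul_le_mul_of_nonneg_left hsx (hl i)
          linarith
      _ ≤ Real.exp (θ * y) * ∑ i, w i * Real.exp (-(lam i * y)) :=
          lowmass w lam hw hl hθ hs hy
  · calc ∑ i ∈ Finset.univ.filter (fun i => ¬ lam i ≤ θ), w i * Real.exp (-(lam i * x))
        ≤ ∑ i ∈ Finset.univ.filter (fun i => ¬ lam i ≤ θ),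
            Real.exp (-(θ * (x - s))) * (w i * Real.exp (-(lam i * s))) := by
          refine Finset.sum_le_sum fun i hi => ?_
          have hiθ : θ ≤ lam i := le_of_not_ge (Finset.mem_filter.1 hi).2
          have hexp : Real.exp (-(lam i * x))
              ≤ Real.exp (-(θ * (x - s))) * Real.exp (-(lam i * s)) := by
            rw [← Real.exp_add]
            apply Real.exp_le_exp.2
            nlinarith [mul_nonneg (sub_nonneg.2 hiθ) (sub_nonneg.2 hsx)]
          calc w i * Real.exp (-(lam i * x))
              ≤ w i * (Real.exp (-(θ * (x - s))) * Real.exp (-(lam i * s))) :=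
                mul_le_mul_of_nonneg_left hexp (hw i)
            _ = Real.exp (-(θ * (x - s))) * (w i * Real.exp (-(lam i * s))) := by ring
      _ ≤ ∑ i, Real.exp (-(θ * (x - s))) * (w i * Real.exp (-(lam i * s))) :=
          Finset.sum_le_sum_of_subset_of_nonneg (Finset.filter_subset _ _)
            (fun i _ _ => mul_nonneg (Real.exp_nonneg _)
              (mul_nonneg (hw i) (Real.exp_nonneg _)))
      _ = Real.exp (-(θ * (x - s))) * ∑ i, w i * Real.exp (-(lam i * s)) := by
          rw [Finset.mul_sum]

lemma ExpMix.split_lower {F : ℝ → ℝ} (hF : ExpMix F) {θ s x y : ℝ}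
    (hθ : 0 ≤ θ) (hx : 0 ≤ x) (hxs : x ≤ s) (hy : 0 ≤ y) :
    Real.exp (θ * (s - x)) * (F s - Real.exp (θ * y) * F y) ≤ F x := by
  obtain ⟨ι, _, w, lam, hw, hl, hrep⟩ := hF
  rw [hrep, hrep, hrep]
  classical
  set H : ℝ := ∑ i ∈ Finset.univ.filter (fun i => ¬ lam i ≤ θ), w i * Real.exp (-(lam i * s))
    with hH
  have hs : 0 ≤ s := hx.trans hxs
  have h1 : ∑ i, w i * Real.exp (-(lam i * s))
      - Real.exp (θ * y) * ∑ i, w i * Real.exp (-(lam i * y)) ≤ H := by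
    have hsplit := Finset.sum_filter_add_sum_filter_not Finset.univ (fun i => lam i ≤ θ)
      (fun i => w i * Real.exp (-(lam i * s)))
    have := lowmass w lam hw hl hθ hs hy (s := s)
    linarith
  have h2 : Real.exp (θ * (s - x)) * H ≤ ∑ i, w i * Real.exp (-(lam i * x)) := by
    calc Real.exp (θ * (s - x)) * H
        = ∑ i ∈ Finset.univ.filter (fun i => ¬ lam i ≤ θ),
            Real.exp (θ * (s - x)) * (w i * Real.exp (-(lam i * s))) := by
          rw [hH, Finset.mul_sum]
      _ ≤ ∑ i ∈ Finset.univ.filter (fun i => ¬ lam i ≤ θ), w i * Real.exp (-(lam i * x)) := by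
          refine Finset.sum_le_sum fun i hi => ?_
          have hiθ : θ ≤ lam i := le_of_not_ge (Finset.mem_filter.1 hi).2
          have hexp : Real.exp (θ * (s - x)) * Real.exp (-(lam i * s))
              ≤ Real.exp (-(lam i * x)) := by
            rw [← Real.exp_add]
            apply Real.exp_le_exp.2
            nlinarith [mul_nonneg (sub_nonneg.2 hiθ) (sub_nonneg.2 hxs)]
          calc Real.exp (θ * (s - x)) * (w i * Real.exp (-(lam i * s)))
              = w i * (Real.exp (θ * (s - x)) * Real.exp (-(lam i * s))) := by ring
            _ ≤ w i * Real.exp (-(lam i * x)) := mul_le_mul_of_nonneg_left hexp (hw i)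
      _ ≤ ∑ i, w i * Real.exp (-(lam i * x)) :=
          Finset.sum_le_sum_of_subset_of_nonneg (Finset.filter_subset _ _)
            (fun i _ _ => mul_nonneg (hw i) (Real.exp_nonneg _))
  calc Real.exp (θ * (s - x)) * (∑ i, w i * Real.exp (-(lam i * s))
        - Real.exp (θ * y) * ∑ i, w i * Real.exp (-(lam i * y)))
      ≤ Real.exp (θ * (s - x)) * H := mul_le_mul_of_nonneg_left h1 (Real.exp_nonneg _)
    _ ≤ ∑ i, w i * Real.exp (-(lam i * x)) := h2

lemma main_abs {F : ℕ → ℝ → ℝ} (hF : ∀ n, ExpMix (F n))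
    {a b : ℕ → ℝ} {c R : ℝ} (hc : 0 < c) (hR : 0 < R)
    (ha : ∀ᶠ n in atTop, 0 < a n) (hab : ∀ᶠ n in atTop, a n ≤ b n)
    (hbR : ∀ᶠ n in atTop, b n ≤ R * a n)
    (hlow : ∀ᶠ n in atTop, c ≤ F n (a n))
    (hhigh : Tendsto (fun n => F n (b n)) atTop (𝓝 0)) :
    ∃ s : ℕ → ℝ, (∀ᶠ n in atTop, 0 < s n) ∧ (∀ᶠ n in atTop, a n ≤ s n) ∧
      ∀ ε ∈ Ioo (0:ℝ) 1,
        Tendsto (fun n => F n ((1 + ε) * s n)) atTop (𝓝 0) ∧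
        Tendsto (fun n => F n ((1 - ε) * s n)) atTop atTop := by
  classical
  set s : ℕ → ℝ := fun n =>
    if h : ∃ x, a n ≤ x ∧ x ≤ b n ∧ F n x = c / 2 then h.choose else 1 with hsdef
  have hP : ∀ᶠ n in atTop, 0 < a n ∧ a n ≤ b n ∧ b n ≤ R * a n ∧ c ≤ F n (a n) ∧
      F n (b n) < c / 2 := by
    filter_upwards [ha, hab, hbR, hlow, hhigh.eventually (gt_mem_nhds (by positivity :
      (0:ℝ) < c / 2))] with n h1 h2 h3 h4 h5
    exact ⟨h1, h2, h3, h4, h5⟩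
  have hs_spec : ∀ᶠ n in atTop, a n ≤ s n ∧ s n ≤ b n ∧ F n (s n) = c / 2 := by
    filter_upwards [hP] with n hn
    have hex : ∃ x, a n ≤ x ∧ x ≤ b n ∧ F n x = c / 2 := by
      have hiv := intermediate_value_Icc' hn.2.1 ((hF n).continuous.continuousOn)
      have hmem : c / 2 ∈ Icc (F n (b n)) (F n (a n)) :=
        ⟨le_of_lt hn.2.2.2.2, by linarith [hn.2.2.2.1]⟩
      obtain ⟨x, hx, hFx⟩ := hiv hmem
      exact ⟨x, hx.1, hx.2, hFx⟩
    have : s n = hex.choose := by rw [hsdef]; exact dif_pos hex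
    rw [this]
    exact hex.choose_spec
  have hs_pos : ∀ᶠ n in atTop, 0 < s n := by
    filter_upwards [hP, hs_spec] with n hn hsn
    exact lt_of_lt_of_le hn.1 hsn.1
  have hFpos : ∀ᶠ n in atTop, 0 < F n (b n) := by
    filter_upwards [hs_spec] with n hsn
    exact (hF n).pos (x₀ := s n) (by rw [hsn.2.2]; positivity) _
  refine ⟨s, hs_pos, by filter_upwards [hs_spec] with n hn using hn.1, fun ε hε => ?_⟩
  constructor
  · -- upper bound : tends to 0
    rw [NormedAddCommGroup.tendsto_nhds_zero]
    intro δ hδ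
    have hKex : ∃ K : ℝ, 0 < K ∧ Real.exp (-(ε * K)) * (c / 2) < δ / 2 := by
      have h1 : Tendsto (fun K : ℝ => ε * K) atTop atTop :=
        Tendsto.const_mul_atTop hε.1 tendsto_id
      have h2 : Tendsto (fun K : ℝ => Real.exp (-(ε * K))) atTop (𝓝 0) :=
        Real.tendsto_exp_neg_atTop_nhds_zero.comp h1
      have h3 : Tendsto (fun K : ℝ => Real.exp (-(ε * K)) * (c / 2)) atTop (𝓝 0) := by
        simpa using h2.mul_const (c / 2)
      obtain ⟨K, hK⟩ :=
        ((h3.eventually (gt_mem_nhds (half_pos hδ))).and (eventually_gt_atTop 0)).exists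
      exact ⟨K, hK.2, hK.1⟩
    obtain ⟨K, hK0, hKδ⟩ := hKex
    have hb0 : Tendsto (fun n => Real.exp (K * R) * F n (b n)) atTop (𝓝 0) := by
      simpa using hhigh.const_mul (Real.exp (K * R))
    filter_upwards [hP, hs_spec, hs_pos,
      hb0.eventually (gt_mem_nhds (half_pos hδ))] with n hn hsn hspos hbn
    have hθ0 : 0 ≤ K / s n := div_nonneg hK0.le hspos.le
    have hsx : s n ≤ (1 + ε) * s n := by nlinarith [hε.1, hspos]
    have hy0 : 0 ≤ b n := le_trans hn.1.le hn.2.1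
    have hsplit := (hF n).split_upper (θ := K / s n) (s := s n) (x := (1 + ε) * s n)
      (y := b n) hθ0 hspos.le hsx hy0
    have hθb : K / s n * b n ≤ K * R := by
      rw [div_mul_eq_mul_div, div_le_iff₀ hspos]
      have h5 : b n ≤ R * s n := le_trans hn.2.2.1 (by nlinarith [hsn.1, hR])
      nlinarith
    have hθx : -(K / s n * ((1 + ε) * s n - s n)) = -(ε * K) := by
      field_simp
      ring
    have hkey : F n ((1 + ε) * s n) ≤ Real.exp (K * R) * F n (b n)
        + Real.exp (-(ε * K)) * (c / 2) := by
      have t1 : Real.exp (K / s n * b n) * F n (b n) ≤ Real.exp (K * R) * F n (b n) :=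
        mul_le_mul_of_nonneg_right (Real.exp_le_exp.2 hθb) ((hF n).nonneg _)
      have t2 : Real.exp (-(K / s n * ((1 + ε) * s n - s n))) * F n (s n)
          = Real.exp (-(ε * K)) * (c / 2) := by rw [hθx, hsn.2.2]
      calc F n ((1 + ε) * s n)
          ≤ Real.exp (K / s n * b n) * F n (b n)
            + Real.exp (-(K / s n * ((1 + ε) * s n - s n))) * F n (s n) := hsplit
        _ ≤ Real.exp (K * R) * F n (b n) + Real.exp (-(ε * K)) * (c / 2) := by
            rw [t2]; linarith
    have hnn : 0 ≤ F n ((1 + ε) * s n) := (hF n).nonneg _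
    rw [Real.norm_eq_abs, abs_of_nonneg hnn]
    linarith
  · -- lower bound : tends to atTop
    set G : ℕ → ℝ := fun n => Real.log (c / 4 / F n (b n)) with hGdef
    have hGtend : Tendsto G atTop atTop := by
      have h1 : Tendsto (fun n => F n (b n)) atTop (𝓝[>] 0) :=
        tendsto_nhdsWithin_iff.2 ⟨hhigh, hFpos⟩
      have h2 : Tendsto (fun n => (F n (b n))⁻¹) atTop atTop := h1.inv_tendsto_nhdsGT_zero
      have h3 : Tendsto (fun n => c / 4 / F n (b n)) atTop atTop := by
        simp only [div_eq_mul_inv (c/4)]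
        exact Tendsto.const_mul_atTop (by positivity) h2
      exact Real.tendsto_log_atTop.comp h3
    have hexp : Tendsto (fun n => c / 4 * Real.exp (ε / R * G n)) atTop atTop := by
      refine Tendsto.const_mul_atTop (by positivity) ?_
      exact Real.tendsto_exp_atTop.comp (Tendsto.const_mul_atTop (div_pos hε.1 hR) hGtend)
    rw [tendsto_atTop]
    intro M
    filter_upwards [hP, hs_spec, hs_pos, hGtend.eventually_ge_atTop 0,
      (tendsto_atTop.1 hexp) M, hFpos] with n hn hsn hspos hG0 hM hFb
    have hb_pos : 0 < b n := lt_of_lt_of_le hn.1 hn.2.1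
    have hθ0 : 0 ≤ G n / b n := div_nonneg hG0 hb_pos.le
    have hx0 : 0 ≤ (1 - ε) * s n := by nlinarith [hε.2, hspos]
    have hxs : (1 - ε) * s n ≤ s n := by nlinarith [hε.1, hspos]
    have hsl := (hF n).split_lower (θ := G n / b n) (s := s n) (x := (1 - ε) * s n)
      (y := b n) hθ0 hx0 hxs hb_pos.le
    have hexpθb : Real.exp (G n / b n * b n) * F n (b n) = c / 4 := by
      rw [div_mul_cancel₀ _ hb_pos.ne', hGdef, Real.exp_log (div_pos (by positivity) hFb),
        div_mul_cancel₀ _ hFb.ne']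
    have hθs : ε / R * G n ≤ G n / b n * (s n - (1 - ε) * s n) := by
      have h1 : s n - (1 - ε) * s n = ε * s n := by ring
      rw [h1, div_mul_eq_mul_div, div_mul_eq_mul_div, div_le_div_iff₀ hR hb_pos]
      have hsb : b n ≤ R * s n := le_trans hn.2.2.1 (by nlinarith [hsn.1, hR])
      have h2 : (ε * G n) * b n ≤ (ε * G n) * (R * s n) :=
        mul_le_mul_of_nonneg_left hsb (mul_nonneg hε.1.le hG0)
      nlinarith
    have hchain : c / 4 * Real.exp (ε / R * G n) ≤ F n ((1 - ε) * s n) := by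
      have e1 : Real.exp (ε / R * G n) ≤ Real.exp (G n / b n * (s n - (1 - ε) * s n)) :=
        Real.exp_le_exp.2 hθs
      have e2 : Real.exp (G n / b n * (s n - (1 - ε) * s n))
          * (F n (s n) - Real.exp (G n / b n * b n) * F n (b n))
          = Real.exp (G n / b n * (s n - (1 - ε) * s n)) * (c / 4) := by
        rw [hsn.2.2, hexpθb]; ring_nf
      calc c / 4 * Real.exp (ε / R * G n)
          ≤ c / 4 * Real.exp (G n / b n * (s n - (1 - ε) * s n)) :=
            mul_le_mul_of_nonneg_left e1 (by positivity)
        _ = Real.exp (G n / b n * (s n - (1 - ε) * s n)) * (c / 4) := by ring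
        _ = Real.exp (G n / b n * (s n - (1 - ε) * s n))
            * (F n (s n) - Real.exp (G n / b n * b n) * F n (b n)) := e2.symm
        _ ≤ F n ((1 - ε) * s n) := hsl
    linarith


open scoped Matrix

lemma vecMul_apply' {S : Type} [Fintype S] (v : S → ℝ) (M : Matrix S S ℝ) (y : S) :
    (v ᵥ* M) y = ∑ x, v x * M x y := rfl

lemma sum_sq_vecMul_star {S : Type} [Fintype S] [DecidableEq S]
    (V : Matrix S S ℝ) (hV1 : star V * V = 1) (r : S → ℝ) :
    ∑ y, ((r ᵥ* star V) y) ^ 2 = ∑ i, r i ^ 2 := by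
  have hsV : (star V)ᵀ = V := by
    ext i j
    rw [Matrix.transpose_apply, Matrix.star_apply, star_trivial]
  have hVTV : Vᵀ * V = 1 := by
    have : Vᵀ = star V := by
      ext i j
      rw [Matrix.transpose_apply, Matrix.star_apply, star_trivial]
    rw [this, hV1]
  calc ∑ y, ((r ᵥ* star V) y) ^ 2
      = (r ᵥ* star V) ⬝ᵥ (r ᵥ* star V) := by
        simp [dotProduct, sq]
    _ = ((star V)ᵀ *ᵥ r) ⬝ᵥ ((star V)ᵀ *ᵥ r) := by rw [Matrix.mulVec_transpose]
    _ = (V *ᵥ r) ⬝ᵥ (V *ᵥ r) := by rw [hsV]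
    _ = ((V *ᵥ r) ᵥ* V) ⬝ᵥ r := Matrix.dotProduct_mulVec _ _ _
    _ = (Vᵀ *ᵥ (V *ᵥ r)) ⬝ᵥ r := by rw [Matrix.mulVec_transpose]
    _ = ((Vᵀ * V) *ᵥ r) ⬝ᵥ r := by rw [Matrix.mulVec_mulVec]
    _ = r ⬝ᵥ r := by rw [hVTV, Matrix.one_mulVec]
    _ = ∑ i, r i ^ 2 := by simp [dotProduct, sq]

lemma quad_eval {S : Type} [Fintype S] [DecidableEq S]
    (g : S → ℝ) (hg : ∀ x, 0 < g x)
    (V : Matrix S S ℝ) (hV1 : star V * V = 1) (hV2 : V * star V = 1)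
    (μv : S → ℝ) (e : S → ℝ) :
    ∑ y, ((∑ x, μv x * (Matrix.diagonal (fun x => (g x)⁻¹)
          * (V * Matrix.diagonal e * star V) * Matrix.diagonal g) x y) / (g y * g y) - 1) ^ 2
        * (g y * g y)
      = ∑ i, ((∑ x, μv x * (g x)⁻¹ * V x i) * e i - ∑ x, g x * V x i) ^ 2 := by
  classical
  set W : Matrix S S ℝ := Matrix.diagonal (fun x => (g x)⁻¹)
    * (V * Matrix.diagonal e * star V) * Matrix.diagonal g with hW
  set u : S → ℝ := fun x => μv x * (g x)⁻¹ with hu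
  set q : S → ℝ := u ᵥ* (V * Matrix.diagonal e * star V) with hq
  have h2 : ∀ y, (∑ x, μv x * W x y) = q y * g y := by
    intro y
    have : (∑ x, μv x * W x y) = (μv ᵥ* W) y := rfl
    rw [this, hW]
    rw [← Matrix.vecMul_vecMul, ← Matrix.vecMul_vecMul]
    rw [Matrix.vecMul_diagonal]
    congr 1
    rw [hq]
    congr 1
    funext x
    rw [Matrix.vecMul_diagonal]
  have h3 : ∀ y, ((q y * g y) / (g y * g y) - 1) ^ 2 * (g y * g y) = (q y - g y) ^ 2 := by
    intro y
    have hgy : g y ≠ 0 := (hg y).ne'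
    field_simp
  set z : S → ℝ := u ᵥ* V with hz
  set cv : S → ℝ := g ᵥ* V with hcv
  have h4 : q = (fun i => z i * e i) ᵥ* star V := by
    rw [hq, ← Matrix.vecMul_vecMul, ← Matrix.vecMul_vecMul]
    have he : (u ᵥ* V) ᵥ* Matrix.diagonal e = fun i => z i * e i := by
      funext i
      rw [Matrix.vecMul_diagonal, hz]
    rw [he]
  have h5 : g = cv ᵥ* star V := by
    have : g = g ᵥ* (1 : Matrix S S ℝ) := by rw [Matrix.vecMul_one]
    rw [this, ← hV2, ← Matrix.vecMul_vecMul]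
  have h6 : ∀ y, q y - g y = ((fun i => z i * e i - cv i) ᵥ* star V) y := by
    intro y
    rw [h4]
    conv_lhs => rw [h5]
    have : (fun i => z i * e i - cv i) = (fun i => z i * e i) - cv := rfl
    rw [this, Matrix.sub_vecMul]
    rfl
  calc ∑ y, ((∑ x, μv x * W x y) / (g y * g y) - 1) ^ 2 * (g y * g y)
      = ∑ y, (q y - g y) ^ 2 := by
        refine Finset.sum_congr rfl fun y _ => ?_
        rw [h2 y, h3 y]
    _ = ∑ y, (((fun i => z i * e i - cv i) ᵥ* star V) y) ^ 2 := by
        refine Finset.sum_congr rfl fun y _ => ?_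
        rw [h6 y]
    _ = ∑ i, (z i * e i - cv i) ^ 2 := sum_sq_vecMul_star V hV1 _
    _ = ∑ i, ((∑ x, μv x * (g x)⁻¹ * V x i) * e i - ∑ x, g x * V x i) ^ 2 := by
        refine Finset.sum_congr rfl fun i _ => ?_
        congr 1

lemma qform_ct {S : Type} [Fintype S] [DecidableEq S] {L : Matrix S S ℝ} {π : S → ℝ}
    (hgen : IsGenerator L) (hπpos : ∀ x, 0 < π x) (hrev : Reversible L π)
    (v : S → ℝ) :
    ∑ x, ∑ y, π x * L x y * (v x * v y) ≤ 0 := by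
  have key : 0 ≤ ∑ x, ∑ y, π x * L x y * (v x - v y) ^ 2 := by
    refine Finset.sum_nonneg fun x _ => Finset.sum_nonneg fun y _ => ?_
    rcases eq_or_ne x y with h | h
    · subst h; simp
    · have h1 := hgen.1 x y h
      have h2 := (hπpos x).le
      positivity
  have expand : ∑ x, ∑ y, π x * L x y * (v x - v y) ^ 2
      = ∑ x, ∑ y, π x * L x y * v x ^ 2 + ∑ x, ∑ y, π x * L x y * v y ^ 2
        - 2 * ∑ x, ∑ y, π x * L x y * (v x * v y) := by
    have h1 : ∑ x, ∑ y, π x * L x y * (v x - v y) ^ 2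
        = ∑ x, ∑ y, (π x * L x y * v x ^ 2 + π x * L x y * v y ^ 2
          - 2 * (π x * L x y * (v x * v y))) :=
      Finset.sum_congr rfl fun x _ => Finset.sum_congr rfl fun y _ => by ring
    rw [h1]
    simp only [Finset.sum_sub_distrib, Finset.sum_add_distrib, ← Finset.mul_sum]
  have hA : ∑ x, ∑ y, π x * L x y * v x ^ 2 = 0 := by
    refine Finset.sum_eq_zero fun x _ => ?_
    have h1 : ∑ y, π x * L x y * v x ^ 2 = π x * v x ^ 2 * ∑ y, L x y := by
      rw [Finset.mul_sum]
      exact Finset.sum_congr rfl fun y _ => by ring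
    rw [h1, hgen.2 x, mul_zero]
  have hB : ∑ x, ∑ y, π x * L x y * v y ^ 2 = 0 := by
    rw [Finset.sum_comm]
    refine Finset.sum_eq_zero fun y _ => ?_
    calc ∑ x, π x * L x y * v y ^ 2 = ∑ x, π y * L y x * v y ^ 2 :=
          Finset.sum_congr rfl fun x _ => by rw [hrev x y]
      _ = π y * v y ^ 2 * ∑ x, L y x := by
          rw [Finset.mul_sum]
          exact Finset.sum_congr rfl fun x _ => by ring
      _ = 0 := by rw [hgen.2 y, mul_zero]
  rw [expand, hA, hB] at key
  linarith

lemma rep_ct {S : Type} [Fintype S] [DecidableEq S]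
    (L : Matrix S S ℝ) (μv π : S → ℝ)
    (hgen : IsGenerator L) (hπpos : ∀ x, 0 < π x) (hrev : Reversible L π) :
    ∃ F : ℝ → ℝ, ExpMix F ∧ ∀ t : ℝ,
      (∑ y, ((∑ x, μv x * NormedSpace.exp (t • L) x y) / π y - 1) ^ 2 * π y) = F t := by
  classical
  set g : S → ℝ := fun x => Real.sqrt (π x) with hgdef
  have hg : ∀ x, 0 < g x := fun x => Real.sqrt_pos.2 (hπpos x)
  have hπg : ∀ x, g x * g x = π x := fun x => Real.mul_self_sqrt (hπpos x).le
  set D : Matrix S S ℝ := Matrix.diagonal g with hD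
  set D' : Matrix S S ℝ := Matrix.diagonal (fun x => (g x)⁻¹) with hD'
  have hDD' : D * D' = 1 := by
    rw [hD, hD', Matrix.diagonal_mul_diagonal]
    have h1 : (fun i => g i * (g i)⁻¹) = fun _ => (1:ℝ) := by
      funext x
      exact mul_inv_cancel₀ (hg x).ne'
    rw [h1, Matrix.diagonal_one]
  have hD'D : D' * D = 1 := by
    rw [hD, hD', Matrix.diagonal_mul_diagonal]
    have h1 : (fun i => (g i)⁻¹ * g i) = fun _ => (1:ℝ) := by
      funext x
      exact inv_mul_cancel₀ (hg x).ne'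
    rw [h1, Matrix.diagonal_one]
  set M : Matrix S S ℝ := D * L * D' with hM
  have hMentry : ∀ x y, M x y = g x * L x y * (g y)⁻¹ := by
    intro x y
    rw [hM, hD, hD', Matrix.mul_diagonal, Matrix.diagonal_mul]
  have hMherm : M.IsHermitian := by
    rw [Matrix.IsHermitian]
    ext x y
    rw [Matrix.conjTranspose_apply, hMentry, hMentry, star_trivial]
    have h1 := hrev x y
    rw [← hπg x, ← hπg y] at h1
    field_simp [(hg x).ne', (hg y).ne']
    linear_combination -h1
  set β : S → ℝ := hMherm.eigenvalues with hβdef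
  set V : Matrix S S ℝ := (hMherm.eigenvectorUnitary : Matrix S S ℝ) with hVdef
  have hVmem := hMherm.eigenvectorUnitary.2
  have hV1 : star V * V = 1 := (Unitary.mem_iff.mp hVmem).1
  have hV2 : V * star V = 1 := (Unitary.mem_iff.mp hVmem).2
  have hspec : M = V * Matrix.diagonal β * star V := by
    have h := hMherm.spectral_theorem
    have hco : (RCLike.ofReal ∘ β : S → ℝ) = β := by
      funext i
      simp [RCLike.ofReal]
    rw [hco] at h
    exact h
  have hMV : M * V = V * Matrix.diagonal β := by
    calc M * V = V * Matrix.diagonal β * (star V * V) := by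
          rw [hspec, Matrix.mul_assoc, Matrix.mul_assoc]
      _ = V * Matrix.diagonal β := by rw [hV1, Matrix.mul_one]
  -- c_i β_i = 0
  have hgM : g ᵥ* M = 0 := by
    rw [hM, ← Matrix.vecMul_vecMul, ← Matrix.vecMul_vecMul]
    have hgD : g ᵥ* D = π := by
      funext y
      rw [hD, Matrix.vecMul_diagonal, hπg]
    have hπL : π ᵥ* L = 0 := by
      funext y
      rw [vecMul_apply']
      calc ∑ x, π x * L x y = ∑ x, π y * L y x :=
            Finset.sum_congr rfl fun x _ => hrev x y
        _ = π y * ∑ x, L y x := by rw [Finset.mul_sum]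
        _ = 0 := by rw [hgen.2 y, mul_zero]
      
    rw [hgD, hπL, Matrix.zero_vecMul]
  have hcβ : ∀ i, (∑ x, g x * V x i) * β i = 0 := by
    have h0 : (g ᵥ* M) ᵥ* V = 0 := by rw [hgM, Matrix.zero_vecMul]
    have h1 : (g ᵥ* M) ᵥ* V = (g ᵥ* V) ᵥ* Matrix.diagonal β := by
      rw [Matrix.vecMul_vecMul, hMV, ← Matrix.vecMul_vecMul]
    intro i
    have h2 := congrFun (h1.symm.trans h0) i
    rw [Matrix.vecMul_diagonal] at h2
    exact h2
  -- eigenvalues nonpositive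
  have hβle : ∀ i, β i ≤ 0 := by
    intro i
    set φ : S → ℝ := fun x => V x i with hφ
    have hMφ : ∀ x, ∑ y, M x y * φ y = β i * φ x := by
      intro x
      have h2 := congrFun (congrFun hMV x) i
      rw [Matrix.mul_apply, Matrix.mul_diagonal] at h2
      rw [hφ]
      rw [h2]
      ring
    have hφn : ∑ x, φ x * φ x = 1 := by
      have h2 := congrFun (congrFun hV1 i) i
      rw [Matrix.mul_apply, Matrix.one_apply_eq] at h2
      calc ∑ x, φ x * φ x = ∑ x, (star V) i x * V x i :=
            Finset.sum_congr rfl fun x _ => by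
              rw [Matrix.star_apply, star_trivial, hφ]
        _ = 1 := h2
    have hquad : ∑ x, φ x * (∑ y, M x y * φ y) ≤ 0 := by
      have hterm : ∀ x y, φ x * (M x y * φ y)
          = π x * L x y * ((φ x * (g x)⁻¹) * (φ y * (g y)⁻¹)) := by
        intro x y
        rw [hMentry, ← hπg x]
        field_simp [(hg x).ne', (hg y).ne']
      calc ∑ x, φ x * (∑ y, M x y * φ y)
          = ∑ x, ∑ y, φ x * (M x y * φ y) := by
            refine Finset.sum_congr rfl fun x _ => ?_
            rw [Finset.mul_sum]
        _ = ∑ x, ∑ y, π x * L x y * ((φ x * (g x)⁻¹) * (φ y * (g y)⁻¹)) :=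
            Finset.sum_congr rfl fun x _ => Finset.sum_congr rfl fun y _ => hterm x y
        _ ≤ 0 := qform_ct hgen hπpos hrev _
    calc β i = β i * ∑ x, φ x * φ x := by rw [hφn, mul_one]
      _ = ∑ x, φ x * (β i * φ x) := by
          rw [Finset.mul_sum]
          exact Finset.sum_congr rfl fun x _ => by ring
      _ = ∑ x, φ x * (∑ y, M x y * φ y) := by
          refine Finset.sum_congr rfl fun x _ => ?_
          rw [hMφ x]
      _ ≤ 0 := hquad
  -- matrix exponential
  have hexpM : ∀ t : ℝ, NormedSpace.exp (t • M)
      = V * Matrix.diagonal (fun i => Real.exp (t * β i)) * star V := by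
    intro t
    have hsm : t • M = V * Matrix.diagonal (fun i => t * β i) * star V := by
      have h0 : (fun i => t * β i) = t • β := rfl
      rw [h0, Matrix.diagonal_smul, Matrix.mul_smul, Matrix.smul_mul, ← hspec]
    have hconj := Matrix.exp_units_conj
      (⟨V, star V, hV2, hV1⟩ : (Matrix S S ℝ)ˣ) (Matrix.diagonal (fun i => t * β i))
    rw [hsm]
    calc NormedSpace.exp (V * Matrix.diagonal (fun i => t * β i) * star V)
        = V * NormedSpace.exp (Matrix.diagonal (fun i => t * β i)) * star V := hconj
      _ = V * Matrix.diagonal (fun i => Real.exp (t * β i)) * star V := by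
          have hpe : (NormedSpace.exp (fun i => t * β i) : S → ℝ)
              = fun i => Real.exp (t * β i) := by
            funext i
            rw [Pi.coe_exp, ← Real.exp_eq_exp_ℝ]
          rw [Matrix.exp_diagonal, hpe]
  have hexpL : ∀ t : ℝ, NormedSpace.exp (t • L)
      = D' * (V * Matrix.diagonal (fun i => Real.exp (t * β i)) * star V) * D := by
    intro t
    have hLconj : t • L = D' * (t • M) * D := by
      rw [hM, Matrix.mul_smul, Matrix.smul_mul]
      have h3 : D' * (D * L * D') * D = D' * D * L * (D' * D) := by
        simp only [Matrix.mul_assoc]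
      rw [h3, hD'D, Matrix.one_mul, Matrix.mul_one]
    rw [hLconj]
    have hconj := Matrix.exp_units_conj
      (⟨D', D, hD'D, hDD'⟩ : (Matrix S S ℝ)ˣ) (t • M)
    calc NormedSpace.exp (D' * (t • M) * D)
        = D' * NormedSpace.exp (t • M) * D := hconj
      _ = D' * (V * Matrix.diagonal (fun i => Real.exp (t * β i)) * star V) * D := by
          rw [hexpM t]
  -- assemble
  set z : S → ℝ := fun i => ∑ x, μv x * (g x)⁻¹ * V x i with hzdef
  set cv : S → ℝ := fun i => ∑ x, g x * V x i with hcvdef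
  set w : S → ℝ := fun i => if β i = 0 then (z i - cv i) ^ 2 else z i ^ 2 with hwdef
  set lam : S → ℝ := fun i => -(2 * β i) with hlamdef
  refine ⟨fun t => ∑ i, w i * Real.exp (-(lam i * t)),
    ⟨S, inferInstance, w, lam, ?_, ?_, fun t => rfl⟩, ?_⟩
  · intro i
    rw [hwdef]
    dsimp only
    split <;> positivity
  · intro i
    rw [hlamdef]
    dsimp only
    have := hβle i
    linarith
  intro t
  calc ∑ y, ((∑ x, μv x * NormedSpace.exp (t • L) x y) / π y - 1) ^ 2 * π y
      = ∑ y, ((∑ x, μv x * (D' * (V * Matrix.diagonal (fun i => Real.exp (t * β i)) * star V)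
          * D) x y) / (g y * g y) - 1) ^ 2 * (g y * g y) := by
        refine Finset.sum_congr rfl fun y _ => ?_
        rw [hexpL t, hπg]
    _ = ∑ i, ((∑ x, μv x * (g x)⁻¹ * V x i) * Real.exp (t * β i) - ∑ x, g x * V x i) ^ 2 := by
        rw [hD, hD']
        exact quad_eval g hg V hV1 hV2 μv _
    _ = ∑ i, w i * Real.exp (-(lam i * t)) := by
        refine Finset.sum_congr rfl fun i _ => ?_
        have hz' : (∑ x, μv x * (g x)⁻¹ * V x i) = z i := rfl
        have hcv' : (∑ x, g x * V x i) = cv i := rfl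
        rw [hz', hcv', hwdef, hlamdef]
        dsimp only
        by_cases hb : β i = 0
        · rw [if_pos hb, hb]
          simp
        · rw [if_neg hb]
          have hc0 : cv i = 0 := by
            rcases mul_eq_zero.1 (hcβ i) with h | h
            · exact h
            · exact absurd h hb
          rw [hc0, sub_zero, mul_pow, pow_two (Real.exp (t * β i)), ← Real.exp_add]
          have harg : t * β i + t * β i = -(-(2 * β i) * t) := by ring
          rw [harg]

lemma qform_dt {S : Type} [Fintype S] [DecidableEq S] {K : Matrix S S ℝ} {π : S → ℝ}
    (hK : IsStochastic K) (hπpos : ∀ x, 0 < π x) (hrev : Reversible K π)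
    (v : S → ℝ) :
    |∑ x, ∑ y, π x * K x y * (v x * v y)| ≤ ∑ x, π x * v x ^ 2 := by
  have hA : ∑ x, ∑ y, π x * K x y * v x ^ 2 = ∑ x, π x * v x ^ 2 := by
    refine Finset.sum_congr rfl fun x _ => ?_
    calc ∑ y, π x * K x y * v x ^ 2 = π x * v x ^ 2 * ∑ y, K x y := by
          rw [Finset.mul_sum]
          exact Finset.sum_congr rfl fun y _ => by ring
      _ = π x * v x ^ 2 := by rw [hK.2 x, mul_one]
  have hB : ∑ x, ∑ y, π x * K x y * v y ^ 2 = ∑ y, π y * v y ^ 2 := by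
    rw [Finset.sum_comm]
    refine Finset.sum_congr rfl fun y _ => ?_
    calc ∑ x, π x * K x y * v y ^ 2 = ∑ x, π y * K y x * v y ^ 2 :=
          Finset.sum_congr rfl fun x _ => by rw [hrev x y]
      _ = π y * v y ^ 2 * ∑ x, K y x := by
          rw [Finset.mul_sum]
          exact Finset.sum_congr rfl fun x _ => by ring
      _ = π y * v y ^ 2 := by rw [hK.2 y, mul_one]
  have h2 : ∑ x, ∑ y, (π x * K x y * v x ^ 2 + π x * K x y * v y ^ 2) / 2
      = (∑ x, ∑ y, π x * K x y * v x ^ 2) / 2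
        + (∑ x, ∑ y, π x * K x y * v y ^ 2) / 2 := by
    simp only [add_div, Finset.sum_add_distrib, Finset.sum_div]
  rw [abs_le]
  constructor
  · have hup : ∑ x, ∑ y, (-(π x * K x y * (v x * v y)))
        ≤ ∑ x, ∑ y, (π x * K x y * v x ^ 2 + π x * K x y * v y ^ 2) / 2 := by
      refine Finset.sum_le_sum fun x _ => Finset.sum_le_sum fun y _ => ?_
      have h0 : 0 ≤ π x * K x y := mul_nonneg (hπpos x).le (hK.1 x y)
      nlinarith [sq_nonneg (v x + v y)]
    have hneg : ∑ x, ∑ y, (-(π x * K x y * (v x * v y)))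
        = -∑ x, ∑ y, π x * K x y * (v x * v y) := by
      simp [Finset.sum_neg_distrib]
    rw [hneg] at hup
    rw [h2, hA, hB] at hup
    linarith
  · have hup : ∑ x, ∑ y, π x * K x y * (v x * v y)
        ≤ ∑ x, ∑ y, (π x * K x y * v x ^ 2 + π x * K x y * v y ^ 2) / 2 := by
      refine Finset.sum_le_sum fun x _ => Finset.sum_le_sum fun y _ => ?_
      have h0 : 0 ≤ π x * K x y := mul_nonneg (hπpos x).le (hK.1 x y)
      nlinarith [sq_nonneg (v x - v y)]
    rw [h2, hA, hB] at hup
    linarith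

lemma rep_dt {S : Type} [Fintype S] [DecidableEq S]
    (K : Matrix S S ℝ) (μv π : S → ℝ)
    (hK : IsStochastic K) (hπpos : ∀ x, 0 < π x) (hrev : Reversible K π) :
    ∃ F : ℝ → ℝ, ExpMix F ∧ ∀ m : ℕ, 1 ≤ m →
      (∑ y, ((∑ x, μv x * (K ^ m) x y) / π y - 1) ^ 2 * π y) = F (m : ℝ) := by
  classical
  set g : S → ℝ := fun x => Real.sqrt (π x) with hgdef
  have hg : ∀ x, 0 < g x := fun x => Real.sqrt_pos.2 (hπpos x)
  have hπg : ∀ x, g x * g x = π x := fun x => Real.mul_self_sqrt (hπpos x).le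
  set D : Matrix S S ℝ := Matrix.diagonal g with hD
  set D' : Matrix S S ℝ := Matrix.diagonal (fun x => (g x)⁻¹) with hD'
  have hDD' : D * D' = 1 := by
    rw [hD, hD', Matrix.diagonal_mul_diagonal]
    have h1 : (fun i => g i * (g i)⁻¹) = fun _ => (1:ℝ) := by
      funext x
      exact mul_inv_cancel₀ (hg x).ne'
    rw [h1, Matrix.diagonal_one]
  have hD'D : D' * D = 1 := by
    rw [hD, hD', Matrix.diagonal_mul_diagonal]
    have h1 : (fun i => (g i)⁻¹ * g i) = fun _ => (1:ℝ) := by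
      funext x
      exact inv_mul_cancel₀ (hg x).ne'
    rw [h1, Matrix.diagonal_one]
  set N : Matrix S S ℝ := D * K * D' with hN
  have hNentry : ∀ x y, N x y = g x * K x y * (g y)⁻¹ := by
    intro x y
    rw [hN, hD, hD', Matrix.mul_diagonal, Matrix.diagonal_mul]
  have hNherm : N.IsHermitian := by
    rw [Matrix.IsHermitian]
    ext x y
    rw [Matrix.conjTranspose_apply, hNentry, hNentry, star_trivial]
    have h1 := hrev x y
    rw [← hπg x, ← hπg y] at h1
    field_simp [(hg x).ne', (hg y).ne']
    linear_combination -h1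
  set β : S → ℝ := hNherm.eigenvalues with hβdef
  set V : Matrix S S ℝ := (hNherm.eigenvectorUnitary : Matrix S S ℝ) with hVdef
  have hVmem := hNherm.eigenvectorUnitary.2
  have hV1 : star V * V = 1 := (Unitary.mem_iff.mp hVmem).1
  have hV2 : V * star V = 1 := (Unitary.mem_iff.mp hVmem).2
  have hspec : N = V * Matrix.diagonal β * star V := by
    have h := hNherm.spectral_theorem
    have hco : (RCLike.ofReal ∘ β : S → ℝ) = β := by
      funext i
      simp [RCLike.ofReal]
    rw [hco] at h
    exact h
  have hNV : N * V = V * Matrix.diagonal β := by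
    calc N * V = V * Matrix.diagonal β * (star V * V) := by
          rw [hspec, Matrix.mul_assoc, Matrix.mul_assoc]
      _ = V * Matrix.diagonal β := by rw [hV1, Matrix.mul_one]
  -- powers
  have hNpow : ∀ m : ℕ, N ^ m = V * Matrix.diagonal (fun i => β i ^ m) * star V := by
    intro m
    induction m with
    | zero =>
        have h1 : (fun i => β i ^ 0) = fun _ => (1:ℝ) := by
          funext i
          exact pow_zero _
        rw [pow_zero, h1, Matrix.diagonal_one, Matrix.mul_one, hV2]
    | succ m ih =>
        rw [pow_succ, ih, hspec]
        calc V * Matrix.diagonal (fun i => β i ^ m) * star V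
              * (V * Matrix.diagonal β * star V)
            = V * Matrix.diagonal (fun i => β i ^ m) * (star V * V)
              * Matrix.diagonal β * star V := by
              simp only [Matrix.mul_assoc]
          _ = V * (Matrix.diagonal (fun i => β i ^ m) * Matrix.diagonal β) * star V := by
              rw [hV1]
              simp only [Matrix.mul_one, Matrix.mul_assoc]
          _ = V * Matrix.diagonal (fun i => β i ^ (m + 1)) * star V := by
              rw [Matrix.diagonal_mul_diagonal]
              have h1 : (fun i => β i ^ m * β i) = fun i => β i ^ (m + 1) := by
                funext i
                rw [pow_succ]
              rw [h1]
  have hKD : K = D' * N * D := by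
    rw [hN]
    have h3 : D' * (D * K * D') * D = D' * D * K * (D' * D) := by
      simp only [Matrix.mul_assoc]
    rw [h3, hD'D, Matrix.one_mul, Matrix.mul_one]
  have hKpow : ∀ m : ℕ, K ^ m = D' * N ^ m * D := by
    intro m
    induction m with
    | zero => rw [pow_zero, pow_zero, Matrix.mul_one, hD'D]
    | succ m ih =>
        rw [pow_succ, ih, pow_succ]
        conv_lhs => rw [hKD]
        calc D' * N ^ m * D * (D' * N * D)
            = D' * N ^ m * (D * D') * N * D := by simp only [Matrix.mul_assoc]
          _ = D' * (N ^ m * N) * D := by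
              rw [hDD']
              simp only [Matrix.mul_one, Matrix.mul_assoc]
  -- invariance : g ᵥ* N = g
  have hπK : π ᵥ* K = π := by
    funext y
    rw [vecMul_apply']
    calc ∑ x, π x * K x y = ∑ x, π y * K y x :=
          Finset.sum_congr rfl fun x _ => hrev x y
      _ = π y * ∑ x, K y x := by rw [Finset.mul_sum]
      _ = π y := by rw [hK.2 y, mul_one]
  have hgN : g ᵥ* N = g := by
    rw [hN, ← Matrix.vecMul_vecMul, ← Matrix.vecMul_vecMul]
    have hgD : g ᵥ* D = π := by
      funext y
      rw [hD, Matrix.vecMul_diagonal, hπg]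
    rw [hgD, hπK]
    funext y
    rw [hD', Matrix.vecMul_diagonal, ← hπg]
    field_simp
  have hcβ : ∀ i, (∑ x, g x * V x i) * β i = ∑ x, g x * V x i := by
    have h0 : (g ᵥ* N) ᵥ* V = g ᵥ* V := by rw [hgN]
    have h1 : (g ᵥ* N) ᵥ* V = (g ᵥ* V) ᵥ* Matrix.diagonal β := by
      rw [Matrix.vecMul_vecMul, hNV, ← Matrix.vecMul_vecMul]
    intro i
    have h2 := congrFun (h1.symm.trans h0) i
    rw [Matrix.vecMul_diagonal] at h2
    exact h2
  -- eigenvalues in [-1,1]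
  have hβsq : ∀ i, β i ^ 2 ≤ 1 := by
    intro i
    set φ : S → ℝ := fun x => V x i with hφ
    have hNφ : ∀ x, ∑ y, N x y * φ y = β i * φ x := by
      intro x
      have h2 := congrFun (congrFun hNV x) i
      rw [Matrix.mul_apply, Matrix.mul_diagonal] at h2
      rw [hφ, h2]
      ring
    have hφn : ∑ x, φ x * φ x = 1 := by
      have h2 := congrFun (congrFun hV1 i) i
      rw [Matrix.mul_apply, Matrix.one_apply_eq] at h2
      calc ∑ x, φ x * φ x = ∑ x, (star V) i x * V x i :=
            Finset.sum_congr rfl fun x _ => by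
              rw [Matrix.star_apply, star_trivial, hφ]
        _ = 1 := h2
    have hquad : |∑ x, φ x * (∑ y, N x y * φ y)| ≤ 1 := by
      have hterm : ∀ x y, φ x * (N x y * φ y)
          = π x * K x y * ((φ x * (g x)⁻¹) * (φ y * (g y)⁻¹)) := by
        intro x y
        rw [hNentry, ← hπg x]
        field_simp [(hg x).ne', (hg y).ne']
      have hsump : ∑ x, π x * (φ x * (g x)⁻¹) ^ 2 = 1 := by
        rw [← hφn]
        refine Finset.sum_congr rfl fun x _ => ?_
        rw [← hπg x]
        field_simp [(hg x).ne']
      have heq : ∑ x, φ x * (∑ y, N x y * φ y)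
          = ∑ x, ∑ y, π x * K x y * ((φ x * (g x)⁻¹) * (φ y * (g y)⁻¹)) := by
        refine Finset.sum_congr rfl fun x _ => ?_
        rw [Finset.mul_sum]
        exact Finset.sum_congr rfl fun y _ => hterm x y
      rw [heq, ← hsump]
      exact qform_dt hK hπpos hrev _
    have hβeq : β i = ∑ x, φ x * (∑ y, N x y * φ y) := by
      calc β i = β i * ∑ x, φ x * φ x := by rw [hφn, mul_one]
        _ = ∑ x, φ x * (β i * φ x) := by
            rw [Finset.mul_sum]
            exact Finset.sum_congr rfl fun x _ => by ring
        _ = ∑ x, φ x * (∑ y, N x y * φ y) := by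
            refine Finset.sum_congr rfl fun x _ => ?_
            rw [hNφ x]
    rw [← hβeq] at hquad
    have h3 := abs_le.1 hquad
    nlinarith [h3.1, h3.2]
  -- assemble
  set z : S → ℝ := fun i => ∑ x, μv x * (g x)⁻¹ * V x i with hzdef
  set cv : S → ℝ := fun i => ∑ x, g x * V x i with hcvdef
  set w : S → ℝ := fun i =>
    if β i = 1 then (z i - cv i) ^ 2 else if β i = 0 then 0 else z i ^ 2 with hwdef
  set lam : S → ℝ := fun i =>
    if β i = 1 then 0 else if β i = 0 then 0 else -Real.log (β i ^ 2) with hlamdef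
  refine ⟨fun t => ∑ i, w i * Real.exp (-(lam i * t)),
    ⟨S, inferInstance, w, lam, ?_, ?_, fun t => rfl⟩, ?_⟩
  · intro i
    rw [hwdef]
    dsimp only
    split
    · positivity
    · split
      · exact le_refl 0
      · positivity
  · intro i
    rw [hlamdef]
    dsimp only
    split
    · exact le_refl 0
    · split
      · exact le_refl 0
      · rw [neg_nonneg]
        refine Real.log_nonpos (by positivity) (hβsq i)
  intro m hm
  have hc0 : ∀ i, β i ≠ 1 → cv i = 0 := by
    intro i hb
    have h2 := hcβ i
    have h3 : cv i * (β i - 1) = 0 := by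
      have : cv i * β i = cv i := h2
      ring_nf
      linarith [this]
    rcases mul_eq_zero.1 h3 with h | h
    · exact h
    · exact absurd (by linarith : β i = 1) hb
  calc ∑ y, ((∑ x, μv x * (K ^ m) x y) / π y - 1) ^ 2 * π y
      = ∑ y, ((∑ x, μv x * (D' * (V * Matrix.diagonal (fun i => β i ^ m) * star V)
          * D) x y) / (g y * g y) - 1) ^ 2 * (g y * g y) := by
        refine Finset.sum_congr rfl fun y _ => ?_
        rw [hKpow m, hNpow m, hπg]
    _ = ∑ i, ((∑ x, μv x * (g x)⁻¹ * V x i) * β i ^ m - ∑ x, g x * V x i) ^ 2 := by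
        rw [hD, hD']
        exact quad_eval g hg V hV1 hV2 μv _
    _ = ∑ i, w i * Real.exp (-(lam i * (m:ℝ))) := by
        refine Finset.sum_congr rfl fun i _ => ?_
        have hz' : (∑ x, μv x * (g x)⁻¹ * V x i) = z i := rfl
        have hcv' : (∑ x, g x * V x i) = cv i := rfl
        rw [hz', hcv', hwdef, hlamdef]
        dsimp only
        by_cases hb1 : β i = 1
        · rw [if_pos hb1, if_pos hb1, hb1]
          simp
        · rw [if_neg hb1, if_neg hb1, hc0 i hb1, sub_zero]
          by_cases hb0 : β i = 0
          · rw [if_pos hb0, if_pos hb0, hb0]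
            rw [zero_pow (by omega : m ≠ 0)]
            simp
          · rw [if_neg hb0, if_neg hb0]
            have hβpos : 0 < β i ^ 2 := by positivity
            have harg : -(-Real.log (β i ^ 2) * (m:ℝ)) = (m:ℝ) * Real.log (β i ^ 2) := by
              ring
            rw [harg, Real.exp_nat_mul, Real.exp_log hβpos]
            ring


lemma tendsto_sqrt_atTop' {f : ℕ → ℝ} (h : Tendsto f atTop atTop) :
    Tendsto (fun n => Real.sqrt (f n)) atTop atTop := by
  rw [tendsto_atTop] at h ⊢
  intro M
  filter_upwards [h (max M 0 ^ 2)] with n hn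
  calc M ≤ max M 0 := le_max_left M 0
    _ = Real.sqrt (max M 0 ^ 2) := (Real.sqrt_sq (le_max_right M 0)).symm
    _ ≤ Real.sqrt (f n) := Real.sqrt_le_sqrt hn

lemma tendsto_sqrt_zero' {f : ℕ → ℝ} (h : Tendsto f atTop (𝓝 0)) :
    Tendsto (fun n => Real.sqrt (f n)) atTop (𝓝 0) :=
  (Real.continuous_sqrt.tendsto' 0 0 Real.sqrt_zero).comp h

lemma liminf_pos_of_tendsto_atTop {f : ℕ → ℝ} (h : Tendsto f atTop atTop) :
    0 < Filter.liminf (fun n => ENNReal.ofReal (f n)) atTop := by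
  have hev : ∀ᶠ n in atTop, (1 : ℝ≥0∞) ≤ ENNReal.ofReal (f n) := by
    filter_upwards [h.eventually_ge_atTop 1] with n hn
    exact ENNReal.one_le_ofReal.2 hn
  have h1 : (1 : ℝ≥0∞) ≤ Filter.liminf (fun n => ENNReal.ofReal (f n)) atTop :=
    Filter.le_liminf_of_le (by isBoundedDefault) hev
  exact lt_of_lt_of_le zero_lt_one h1

lemma eventually_le_of_liminf_pos {f : ℕ → ℝ} (hf : ∀ n, 0 ≤ f n)
    (h : 0 < Filter.liminf (fun n => ENNReal.ofReal (f n)) atTop) :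
    ∃ c : ℝ, 0 < c ∧ ∀ᶠ n in atTop, c ≤ f n := by
  obtain ⟨c', hc'0, hc'lt⟩ := exists_between h
  have hc'top : c' ≠ ⊤ := (hc'lt.trans_le le_top).ne
  refine ⟨c'.toReal, ENNReal.toReal_pos hc'0.ne' hc'top, ?_⟩
  filter_upwards [Filter.eventually_lt_of_lt_liminf hc'lt] with n hn
  have h2 := (ENNReal.toReal_le_toReal hc'top ENNReal.ofReal_ne_top).2 hn.le
  rwa [ENNReal.toReal_ofReal (hf n)] at h2


theorem stmt_11
    -- Part (1): a family of irreducible reversible continuous-time chains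
    (S : ℕ → Type) [∀ n, Fintype (S n)] [∀ n, DecidableEq (S n)] [∀ n, Nonempty (S n)]
    (L : ∀ n, Matrix (S n) (S n) ℝ) (μ π : ∀ n, S n → ℝ)
    (hgen : ∀ n, IsGenerator (L n)) (hirr : ∀ n, GenIrreducible (L n))
    (hμ : ∀ n, IsProb (μ n)) (hπ : ∀ n, IsProb (π n)) (hπpos : ∀ n x, 0 < π n x)
    (hrev : ∀ n, Reversible (L n) (π n))
    -- `liminf_n π_n(|μ_n/π_n|²) > 1`
    (hliminf : 1 < Filter.liminf
      (fun n => ENNReal.ofReal (∑ x, (μ n x) ^ 2 / π n x)) atTop)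
    -- Part (2): a family of irreducible reversible discrete-time chains
    (S' : ℕ → Type) [∀ n, Fintype (S' n)] [∀ n, DecidableEq (S' n)] [∀ n, Nonempty (S' n)]
    (K : ∀ n, Matrix (S' n) (S' n) ℝ) (μ' π' : ∀ n, S' n → ℝ)
    (hK : ∀ n, IsStochastic (K n)) (hirr' : ∀ n, MatIrreducible (K n))
    (hμ' : ∀ n, IsProb (μ' n)) (hπ' : ∀ n, IsProb (π' n)) (hπ'pos : ∀ n x, 0 < π' n x)
    (hrev' : ∀ n, Reversible (K n) (π' n))
    -- `liminf_n π_n(|μ_n K_n/π_n|²) > 1`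
    (hliminf' : 1 < Filter.liminf
      (fun n => ENNReal.ofReal (∑ x, (∑ z, μ' n z * K n z x) ^ 2 / π' n x)) atTop)
    -- `T_{n,2}(μ_n,ε₀) → ∞` for some `ε₀ ∈ (0,∞)`
    (hmix' : ∃ ε₀ > (0 : ℝ),
      Tendsto (fun n => (Tmix2dt (K n) (μ' n) (π' n) ε₀ : ℝ)) atTop atTop) :
    (HasCutoffCT (fun n t => d2ct (L n) (μ n) (π n) t) ↔
      HasPreCutoffCT (fun n t => d2ct (L n) (μ n) (π n) t)) ∧
    (HasCutoffDT (fun n m => d2dt (K n) (μ' n) (π' n) m) ↔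
      HasPreCutoffDT (fun n m => d2dt (K n) (μ' n) (π' n) m)) := by
  constructor
  · -- continuous time
    constructor
    · rintro ⟨t, htpos, hcut⟩
      obtain ⟨h0, hinf⟩ := hcut (1/2) (by rw [Set.mem_Ioo]; constructor <;> norm_num)
      refine ⟨t, 1/2, 3/2, by norm_num, by norm_num, htpos, ?_, ?_⟩
      · have he : (3/2 : ℝ) = 1 + 1/2 := by norm_num
        rw [he]
        exact h0
      · have he : (1/2 : ℝ) = 1 - 1/2 := by norm_num
        rw [he]
        exact liminf_pos_of_tendsto_atTop hinf
    · rintro ⟨t, A, B, hA, hAB, htpos, hB0, hliminfA⟩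
      obtain ⟨F, hFmix, hFeq⟩ :
          ∃ F : ℕ → ℝ → ℝ, (∀ n, ExpMix (F n)) ∧ ∀ n (τ : ℝ),
            (∑ y, ((∑ x, μ n x * NormedSpace.exp (τ • L n) x y) / π n y - 1) ^ 2 * π n y)
              = F n τ := by
        choose F h1 h2 using fun n => rep_ct (L n) (μ n) (π n) (hgen n) (hπpos n) (hrev n)
        exact ⟨F, h1, h2⟩
      have hd : ∀ n (τ : ℝ), d2ct (L n) (μ n) (π n) τ = Real.sqrt (F n τ) :=
        fun n τ => congrArg Real.sqrt (hFeq n τ)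
      obtain ⟨c₀, hc₀, hevA⟩ := eventually_le_of_liminf_pos
        (fun n => Real.sqrt_nonneg _) hliminfA
      have hFlow : ∀ᶠ n in atTop, c₀ ^ 2 ≤ F n (A * t n) := by
        filter_upwards [hevA] with n hn
        have h2 : d2ct (L n) (μ n) (π n) (A * t n) ^ 2 = F n (A * t n) := by
          rw [hd, Real.sq_sqrt ((hFmix n).nonneg _)]
        have hn' : c₀ ≤ d2ct (L n) (μ n) (π n) (A * t n) := hn
        calc c₀ ^ 2 ≤ d2ct (L n) (μ n) (π n) (A * t n) ^ 2 := by nlinarith [hn', hc₀]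
          _ = F n (A * t n) := h2
      have hFhigh : Tendsto (fun n => F n (B * t n)) atTop (𝓝 0) := by
        have h1 : ∀ n, F n (B * t n) = d2ct (L n) (μ n) (π n) (B * t n) ^ 2 := fun n => by
          rw [hd, Real.sq_sqrt ((hFmix n).nonneg _)]
        have h2 : Tendsto (fun n => d2ct (L n) (μ n) (π n) (B * t n) ^ 2)
            atTop (𝓝 ((0:ℝ) ^ 2)) := hB0.pow 2
        norm_num at h2
        exact h2.congr fun n => (h1 n).symm
      obtain ⟨s, hspos, hsgeA, hscut⟩ := main_abs hFmix (a := fun n => A * t n)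
        (b := fun n => B * t n) (c := c₀ ^ 2) (R := B / A) (pow_pos hc₀ 2)
        (div_pos (hA.trans hAB) hA)
        (by filter_upwards [htpos] with n hn; positivity)
        (by filter_upwards [htpos] with n hn
            exact mul_le_mul_of_nonneg_right hAB.le hn.le)
        (by filter_upwards [htpos] with n hn
            have h3 : B / A * (A * t n) = B * t n := by
              field_simp
            exact le_of_eq h3.symm)
        hFlow hFhigh
      refine ⟨s, hspos, fun a ha => ?_⟩
      obtain ⟨hup, hlo⟩ := hscut a ha
      constructor
      · exact (tendsto_sqrt_zero' hup).congr fun n => (hd n _).symm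
      · exact (tendsto_sqrt_atTop' hlo).congr fun n => (hd n _).symm
  · -- discrete time
    constructor
    · rintro ⟨t, htpos, hcut⟩
      obtain ⟨h0, hinf⟩ := hcut (1/2) (by rw [Set.mem_Ioo]; constructor <;> norm_num)
      refine ⟨t, 1/2, 3/2, by norm_num, by norm_num, htpos, ?_, ?_⟩
      · have he : (3/2 : ℝ) = 1 + 1/2 := by norm_num
        rw [he]
        exact h0
      · have he : (1/2 : ℝ) = 1 - 1/2 := by norm_num
        rw [he]
        exact liminf_pos_of_tendsto_atTop hinf
    · rintro ⟨t, A, B, hA, hAB, htpos, hB0, hliminfA⟩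
      obtain ⟨ε₀, hε₀, hTmix⟩ := hmix'
      have hBpos : 0 < B := hA.trans hAB
      obtain ⟨F, hFmix, hFeq⟩ :
          ∃ F : ℕ → ℝ → ℝ, (∀ n, ExpMix (F n)) ∧ ∀ n (m : ℕ), 1 ≤ m →
            (∑ y, ((∑ x, μ' n x * (K n ^ m) x y) / π' n y - 1) ^ 2 * π' n y)
              = F n (m : ℝ) := by
        choose F h1 h2 using fun n => rep_dt (K n) (μ' n) (π' n) (hK n) (hπ'pos n) (hrev' n)
        exact ⟨F, h1, h2⟩
      have hd : ∀ n (m : ℕ), 1 ≤ m →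
          d2dt (K n) (μ' n) (π' n) m = Real.sqrt (F n (m : ℝ)) :=
        fun n m hm => congrArg Real.sqrt (hFeq n m hm)
      -- `t n → ∞`
      have httop : Tendsto t atTop atTop := by
        have hevT : ∀ᶠ n in atTop,
            (Tmix2dt (K n) (μ' n) (π' n) ε₀ : ℝ) ≤ (⌈B * t n⌉₊ : ℝ) := by
          filter_upwards [hB0.eventually (gt_mem_nhds hε₀)] with n hn
          have hmem : ⌈B * t n⌉₊ ∈ {m : ℕ | d2dt (K n) (μ' n) (π' n) m ≤ ε₀} := hn.le
          have h2 : Tmix2dt (K n) (μ' n) (π' n) ε₀ ≤ ⌈B * t n⌉₊ := Nat.sInf_le hmem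
          exact_mod_cast h2
        have h1 : Tendsto (fun n => ((Tmix2dt (K n) (μ' n) (π' n) ε₀ : ℝ) + -1) / B)
            atTop atTop :=
          (tendsto_atTop_add_const_right atTop (-1) hTmix).atTop_div_const hBpos
        refine tendsto_atTop_mono' atTop ?_ h1
        filter_upwards [hevT, htpos] with n h2 h3
        have h4 : (⌈B * t n⌉₊ : ℝ) < B * t n + 1 := Nat.ceil_lt_add_one (by positivity)
        rw [div_le_iff₀ hBpos]
        nlinarith
      obtain ⟨c₀, hc₀, hevA⟩ := eventually_le_of_liminf_pos
        (fun n => Real.sqrt_nonneg _) hliminfA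
      have hkey : ∀ᶠ n in atTop, 2 ≤ A * t n ∧ 1 ≤ B * t n := by
        filter_upwards [httop.eventually_ge_atTop (2 / A),
          httop.eventually_ge_atTop (1 / B)] with n h1 h2
        constructor
        · have h3 := (div_le_iff₀ hA).1 h1
          nlinarith
        · have h3 := (div_le_iff₀ hBpos).1 h2
          nlinarith
      have hfl1 : ∀ᶠ n in atTop, 1 ≤ ⌊A * t n⌋₊ := by
        filter_upwards [hkey] with n hn
        exact Nat.le_floor (by exact_mod_cast (by linarith [hn.1] : (1:ℝ) ≤ A * t n))
      have hcl1 : ∀ᶠ n in atTop, 1 ≤ ⌈B * t n⌉₊ := by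
        filter_upwards [hkey] with n hn
        exact Nat.one_le_ceil_iff.2 (by linarith [hn.2])
      have hFlow : ∀ᶠ n in atTop, c₀ ^ 2 ≤ F n ((⌊A * t n⌋₊ : ℕ) : ℝ) := by
        filter_upwards [hevA, hfl1] with n h1 h2
        have h3 : d2dt (K n) (μ' n) (π' n) ⌊A * t n⌋₊ ^ 2 = F n ((⌊A * t n⌋₊ : ℕ) : ℝ) := by
          rw [hd n _ h2, Real.sq_sqrt ((hFmix n).nonneg _)]
        have h1' : c₀ ≤ d2dt (K n) (μ' n) (π' n) ⌊A * t n⌋₊ := h1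
        calc c₀ ^ 2 ≤ d2dt (K n) (μ' n) (π' n) ⌊A * t n⌋₊ ^ 2 := by nlinarith [h1', hc₀]
          _ = F n ((⌊A * t n⌋₊ : ℕ) : ℝ) := h3
      have hFhigh : Tendsto (fun n => F n ((⌈B * t n⌉₊ : ℕ) : ℝ)) atTop (𝓝 0) := by
        have h2 : Tendsto (fun n => d2dt (K n) (μ' n) (π' n) ⌈B * t n⌉₊ ^ 2)
            atTop (𝓝 ((0:ℝ) ^ 2)) := hB0.pow 2
        norm_num at h2
        refine h2.congr' ?_
        filter_upwards [hcl1] with n h3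
        rw [hd n _ h3, Real.sq_sqrt ((hFmix n).nonneg _)]
      obtain ⟨s, hspos, hsgeA, hscut⟩ := main_abs hFmix
        (a := fun n => ((⌊A * t n⌋₊ : ℕ) : ℝ)) (b := fun n => ((⌈B * t n⌉₊ : ℕ) : ℝ))
        (c := c₀ ^ 2) (R := 4 * B / A) (pow_pos hc₀ 2)
        (div_pos (by nlinarith [hBpos] : (0:ℝ) < 4 * B) hA)
        (by filter_upwards [hfl1] with n hn
            exact_mod_cast Nat.lt_of_lt_of_le Nat.zero_lt_one hn)
        (by filter_upwards [hkey, htpos] with n hn h3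
            have h4 : (⌊A * t n⌋₊ : ℝ) ≤ A * t n := Nat.floor_le (by positivity)
            have h5 : A * t n ≤ B * t n := by nlinarith [hAB, h3]
            have h6 : (B * t n : ℝ) ≤ (⌈B * t n⌉₊ : ℝ) := Nat.le_ceil _
            linarith)
        (by filter_upwards [hkey, htpos] with n hn h3
            have h4 : (⌈B * t n⌉₊ : ℝ) < B * t n + 1 := Nat.ceil_lt_add_one (by positivity)
            have h5 : A * t n - 1 < (⌊A * t n⌋₊ : ℝ) := Nat.sub_one_lt_floor _
            have h6 : A * t n ≤ 2 * (⌊A * t n⌋₊ : ℝ) := by nlinarith [hn.1]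
            rw [div_mul_eq_mul_div, le_div_iff₀ hA]
            nlinarith [hn.2, mul_le_mul_of_nonneg_left h6 (by positivity : (0:ℝ) ≤ 2 * B),
              mul_le_mul_of_nonneg_right h4.le hA.le,
              mul_le_mul_of_nonneg_left hn.2 hA.le])
        hFlow hFhigh
      -- `s n → ∞`
      have hatop : Tendsto (fun n => ((⌊A * t n⌋₊ : ℕ) : ℝ)) atTop atTop := by
        have h0 : Tendsto (fun n => A * t n + -1) atTop atTop :=
          tendsto_atTop_add_const_right atTop (-1) (Tendsto.const_mul_atTop hA httop)
        refine tendsto_atTop_mono' atTop ?_ h0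
        filter_upwards with n
        have h5 : A * t n - 1 < (⌊A * t n⌋₊ : ℝ) := Nat.sub_one_lt_floor _
        linarith
      have hstop : Tendsto s atTop atTop := tendsto_atTop_mono' atTop hsgeA hatop
      refine ⟨s, hspos, fun a ha => ?_⟩
      obtain ⟨hup, hlo⟩ := hscut a ha
      have h1a : 0 < 1 - a := by linarith [ha.2]
      constructor
      · -- upper
        have hcs1 : ∀ᶠ n in atTop, 1 ≤ ⌈(1 + a) * s n⌉₊ := by
          filter_upwards [hspos] with n hn
          exact Nat.one_le_ceil_iff.2 (by nlinarith [ha.1])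
        have hsq : Tendsto (fun n => F n ((⌈(1 + a) * s n⌉₊ : ℕ) : ℝ)) atTop (𝓝 0) := by
          refine squeeze_zero' (Filter.Eventually.of_forall fun n => (hFmix n).nonneg _)
            ?_ hup
          filter_upwards with n
          exact (hFmix n).antitone (Nat.le_ceil _)
        refine (tendsto_sqrt_zero' hsq).congr' ?_
        filter_upwards [hcs1] with n h3
        exact (hd n _ h3).symm
      · -- lower
        have hstendsto : Tendsto (fun n => (1 - a) * s n) atTop atTop :=
          Tendsto.const_mul_atTop h1a hstop
        have hfs1 : ∀ᶠ n in atTop, 1 ≤ ⌊(1 - a) * s n⌋₊ := by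
          filter_upwards [hstendsto.eventually_ge_atTop 1] with n hn
          exact Nat.le_floor (by exact_mod_cast hn)
        have hsq : Tendsto (fun n => F n ((⌊(1 - a) * s n⌋₊ : ℕ) : ℝ)) atTop atTop := by
          refine tendsto_atTop_mono' atTop ?_ hlo
          filter_upwards [hspos] with n hn
          exact (hFmix n).antitone (Nat.floor_le (by positivity))
        refine (tendsto_sqrt_atTop' hsq).congr' ?_
        filter_upwards [hfs1] with n h3
        exact (hd n _ h3).symm
end

section
/- Let (μ_n, S_n, K_n, π_n)_{n≥1} be a family of irreducible and reversible discrete-time finite Markov chains; let F_c be the associated family of continuous-time chains (generators L_n = K_n − I) and, for θ ∈ (1/2, 1), let F_θ be the family of θ-lazy chains (transition matrices K_{n,θ} = θI + (1−θ)K_n), with L²-mixing times T^{(c)}_{n,2}(μ_n,·) and T^{(θ)}_{n,2}(μ_n,·). Assume ∑_x μ_n(x)²/π_n(x) → ∞, both F_c and F_θ have L²-cutoffs, and there is ε₀ > 0 such that T^{(c)}_{n,2}(μ_n,ε₀) → ∞ or T^{(θ)}_{n,2}(μ_n,ε₀) → ∞. Then for every ε > 0: 1 − θ ≤ liminf_n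 T^{(c)}_{n,2}(μ_n,ε)/T^{(θ)}_{n,2}(μ_n,ε) ≤ limsup_n T^{(c)}_{n,2}(μ_n,ε)/T^{(θ)}_{n,2}(μ_n,ε) ≤ −log(2θ−1)/2. -/
open MeasureTheory Filter Set Topology

section AuxiliaryChainLemmas

open Matrix

set_option linter.unusedSectionVars false
set_option maxHeartbeats 1000000

variable {S : Type*} [Fintype S] [DecidableEq S] [Nonempty S]

lemma sumSq_vecMul (W : Matrix S S ℝ) (hW : W * Wᵀ = 1) (z : S → ℝ) :
    ∑ y, ((z ᵥ* W) y)^2 = ∑ x, (z x)^2 := by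
  have h1 : ∑ y, ((z ᵥ* W) y)^2 = (z ᵥ* W) ⬝ᵥ (z ᵥ* W) := by
    simp [dotProduct, sq]
  have h2 : (z ᵥ* W) ⬝ᵥ (z ᵥ* W) = z ⬝ᵥ (W *ᵥ (z ᵥ* W)) :=
    (dotProduct_mulVec z W (z ᵥ* W)).symm
  have h3 : W *ᵥ (z ᵥ* W) = (W * Wᵀ) *ᵥ z := by
    rw [← mulVec_transpose, mulVec_mulVec]
  rw [h1, h2, h3, hW, one_mulVec]
  simp [dotProduct, sq]

lemma master_formula (π μ : S → ℝ) (hπpos : ∀ x, 0 < π x)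
    (U : Matrix S S ℝ) (hU : U * Uᵀ = 1)
    (M : Matrix S S ℝ) (f : S → ℝ)
    (hM : (Matrix.diagonal fun x => Real.sqrt (π x)) * M *
        (Matrix.diagonal fun x => (Real.sqrt (π x))⁻¹) = U * Matrix.diagonal f * Uᵀ)
    (hπM : π ᵥ* M = π) :
    ∑ y, ((∑ x, μ x * M x y) / π y - 1)^2 * π y
      = ∑ i, ((fun x => (μ x - π x) / Real.sqrt (π x)) ᵥ* U) i ^2 * f i ^2 := by
  set ρ : S → ℝ := fun x => μ x - π x with hρ
  set σ : S → ℝ := fun x => (μ x - π x) / Real.sqrt (π x) with hσ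
  have hsne : ∀ x, Real.sqrt (π x) ≠ 0 := fun x =>
    ne_of_gt (Real.sqrt_pos.mpr (hπpos x))
  -- step A : μ ᵥ* M = ρ ᵥ* M + π
  have hA : ∀ y, (∑ x, μ x * M x y) = (ρ ᵥ* M) y + π y := by
    intro y
    have : μ ᵥ* M = ρ ᵥ* M + π ᵥ* M := by
      have : μ = ρ + π := by funext x; simp [hρ]
      rw [this, add_vecMul]
    have h2 := congrFun this y
    simpa [Matrix.vecMul, dotProduct, hπM] using h2
  -- step B : pointwise reduction
  have hB : ∀ y, ((∑ x, μ x * M x y) / π y - 1)^2 * π y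
      = ((ρ ᵥ* M) y * (Real.sqrt (π y))⁻¹)^2 := by
    intro y
    rw [hA y]
    have hpy := hπpos y
    have : ((ρ ᵥ* M) y + π y) / π y - 1 = (ρ ᵥ* M) y / π y := by
      field_simp
      ring
    rw [this]
    rw [div_pow, mul_pow, inv_pow, Real.sq_sqrt hpy.le]
    field_simp
  -- step C : (ρ ᵥ* M) · (√π ·)⁻¹ = σ ᵥ* (U * diagonal f * Uᵀ)
  have hσD : σ ᵥ* (Matrix.diagonal fun x => Real.sqrt (π x)) = ρ := by
    funext x
    rw [vecMul_diagonal]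
    simp [hσ, hρ, div_mul_cancel₀ _ (hsne x)]
  have hC : (fun y => (ρ ᵥ* M) y * (Real.sqrt (π y))⁻¹)
      = σ ᵥ* (U * Matrix.diagonal f * Uᵀ) := by
    rw [← hM]
    have : σ ᵥ* ((Matrix.diagonal fun x => Real.sqrt (π x)) * M *
        (Matrix.diagonal fun x => (Real.sqrt (π x))⁻¹))
        = ((σ ᵥ* (Matrix.diagonal fun x => Real.sqrt (π x))) ᵥ* M)
            ᵥ* (Matrix.diagonal fun x => (Real.sqrt (π x))⁻¹) := by
      rw [vecMul_vecMul, vecMul_vecMul, Matrix.mul_assoc]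
    rw [this, hσD]
    funext y
    rw [vecMul_diagonal]
  -- step D : push through the diagonalization
  have hD : σ ᵥ* (U * Matrix.diagonal f * Uᵀ)
      = (fun i => (σ ᵥ* U) i * f i) ᵥ* Uᵀ := by
    rw [← vecMul_vecMul, ← vecMul_vecMul]
    have : (σ ᵥ* U) ᵥ* Matrix.diagonal f = fun i => (σ ᵥ* U) i * f i := by
      funext i; rw [vecMul_diagonal]
    rw [this]
  calc ∑ y, ((∑ x, μ x * M x y) / π y - 1)^2 * π y
      = ∑ y, (((fun i => (σ ᵥ* U) i * f i) ᵥ* Uᵀ) y)^2 := by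
        refine Finset.sum_congr rfl fun y _ => ?_
        rw [hB y]
        rw [show (ρ ᵥ* M) y * (Real.sqrt (π y))⁻¹
            = (fun y => (ρ ᵥ* M) y * (Real.sqrt (π y))⁻¹) y from rfl, hC, hD]
    _ = ∑ i, ((σ ᵥ* U) i * f i)^2 := by
        refine sumSq_vecMul Uᵀ ?_ _
        rw [transpose_transpose]
        -- need Uᵀ * U = 1 from U * Uᵀ = 1 (square matrices)
        exact mul_eq_one_comm.mp hU
    _ = ∑ i, ((fun x => (μ x - π x) / Real.sqrt (π x)) ᵥ* U) i ^2 * f i ^2 := by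
        refine Finset.sum_congr rfl fun i _ => ?_
        rw [mul_pow]

lemma isStochastic_pow {K : Matrix S S ℝ} (hK : IsStochastic K) (m : ℕ) :
    IsStochastic (K ^ m) := by
  induction m with
  | zero =>
    constructor
    · intro x y; simp [Matrix.one_apply]; split <;> norm_num
    · intro x; simp [Matrix.one_apply]
  | succ m ih =>
    rw [pow_succ]
    constructor
    · intro x y
      rw [Matrix.mul_apply]
      exact Finset.sum_nonneg fun z _ => mul_nonneg (ih.1 x z) (hK.1 z y)
    · intro x
      simp_rw [Matrix.mul_apply]
      rw [Finset.sum_comm]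
      calc ∑ z, ∑ y, (K ^ m) x z * K z y
          = ∑ z, (K ^ m) x z * ∑ y, K z y := by
            simp [Finset.mul_sum]
        _ = 1 := by simp [hK.2, ih.2 x]

lemma eig_abs_le_one {K : Matrix S S ℝ} (hK : IsStochastic K) {g : S → ℝ} (hg : g ≠ 0)
    {r : ℝ} (h : K *ᵥ g = r • g) : |r| ≤ 1 := by
  obtain ⟨x₀, -, hx₀⟩ := Finset.exists_max_image Finset.univ (fun x => |g x|)
    ⟨Classical.arbitrary S, Finset.mem_univ _⟩
  have hx₀' : ∀ x, |g x| ≤ |g x₀| := fun x => hx₀ x (Finset.mem_univ x)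
  have hpos : 0 < |g x₀| := by
    obtain ⟨x, hx⟩ := Function.ne_iff.mp hg
    exact lt_of_lt_of_le (abs_pos.mpr hx) (hx₀' x)
  have key : |r| * |g x₀| ≤ |g x₀| := by
    have h1 : |r| * |g x₀| = |(K *ᵥ g) x₀| := by
      rw [h]; simp [abs_mul]
    rw [h1]
    have : (K *ᵥ g) x₀ = ∑ y, K x₀ y * g y := rfl
    rw [this]
    calc |∑ y, K x₀ y * g y| ≤ ∑ y, |K x₀ y * g y| := Finset.abs_sum_le_sum_abs _ _
      _ ≤ ∑ y, K x₀ y * |g x₀| := by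
          refine Finset.sum_le_sum fun y _ => ?_
          rw [abs_mul, abs_of_nonneg (hK.1 x₀ y)]
          exact mul_le_mul_of_nonneg_left (hx₀' y) (hK.1 x₀ y)
      _ = |g x₀| := by rw [← Finset.sum_mul, hK.2 x₀, one_mul]
  exact le_of_mul_le_mul_right (by linarith [key]) hpos

lemma eig_one_const {K : Matrix S S ℝ} (hK : IsStochastic K) (hirr : MatIrreducible K)
    {g : S → ℝ} (h : K *ᵥ g = g) : ∀ x y, g x = g y := by
  have hpow : ∀ m : ℕ, (K ^ m) *ᵥ g = g := by
    intro m
    induction m with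
    | zero => simp
    | succ m ih => rw [pow_succ', ← mulVec_mulVec, ih, h]
  obtain ⟨x₀, -, hx₀⟩ := Finset.exists_max_image Finset.univ g
    ⟨Classical.arbitrary S, Finset.mem_univ _⟩
  have hx₀' : ∀ x, g x ≤ g x₀ := fun x => hx₀ x (Finset.mem_univ x)
  suffices hc : ∀ y, g y = g x₀ by intro x y; rw [hc x, hc y]
  intro y
  by_contra hne
  have hlt : g y < g x₀ := lt_of_le_of_ne (hx₀' y) hne
  obtain ⟨m, hm⟩ := hirr x₀ y
  have hst := isStochastic_pow hK m
  have heq : ∑ z, (K ^ m) x₀ z * g z = g x₀ := by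
    have := congrFun (hpow m) x₀
    simpa [Matrix.mulVec, dotProduct] using this
  have hstrict : ∑ z, (K ^ m) x₀ z * g z < ∑ z, (K ^ m) x₀ z * g x₀ := by
    refine Finset.sum_lt_sum (fun z _ => mul_le_mul_of_nonneg_left (hx₀' z) (hst.1 x₀ z))
      ⟨y, Finset.mem_univ y, ?_⟩
    exact mul_lt_mul_of_pos_left hlt hm
  rw [heq, ← Finset.sum_mul, hst.2 x₀, one_mul] at hstrict
  exact lt_irrefl _ hstrict

lemma vecMul_pow_eq_zero {L : Matrix S S ℝ} {v : S → ℝ} (hv : v ᵥ* L = 0) (k : ℕ) (hk : k ≠ 0) :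
    v ᵥ* L ^ k = 0 := by
  obtain ⟨k, rfl⟩ := Nat.exists_eq_succ_of_ne_zero hk
  induction k with
  | zero => simpa using hv
  | succ k ih =>
    rw [pow_succ, ← vecMul_vecMul, ih (Nat.succ_ne_zero k)]
    funext y
    simp [Matrix.vecMul, dotProduct]

lemma vecMul_exp_of_eq_zero (L : Matrix S S ℝ) (v : S → ℝ) (hv : v ᵥ* L = 0) :
    v ᵥ* NormedSpace.exp L = v := by
  letI : SeminormedRing (Matrix S S ℝ) := Matrix.linftyOpSemiNormedRing
  letI : NormedRing (Matrix S S ℝ) := Matrix.linftyOpNormedRing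
  letI : NormedAlgebra ℝ (Matrix S S ℝ) := Matrix.linftyOpNormedAlgebra
  have hsum : Summable (fun k : ℕ => ((k.factorial : ℝ))⁻¹ • L ^ k) :=
    NormedSpace.expSeries_summable' (𝕂 := ℝ) L
  let T : Matrix S S ℝ →ₗ[ℝ] (S → ℝ) :=
    { toFun := fun M => v ᵥ* M
      map_add' := fun A B => vecMul_add A B v
      map_smul' := fun c A => by
        funext y
        simp [Matrix.vecMul, dotProduct, Finset.mul_sum, mul_comm, mul_assoc, mul_left_comm] }
  have hT : Continuous T := LinearMap.continuous_of_finiteDimensional T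
  have hhs : HasSum (fun k : ℕ => T (((k.factorial : ℝ))⁻¹ • L ^ k))
      (T (∑' k : ℕ, ((k.factorial : ℝ))⁻¹ • L ^ k)) :=
    hsum.hasSum.map T.toAddMonoidHom hT
  have h1 : v ᵥ* NormedSpace.exp L = ∑' k : ℕ, T (((k.factorial : ℝ))⁻¹ • L ^ k) := by
    rw [NormedSpace.exp_eq_tsum ℝ]
    exact hhs.tsum_eq.symm
  rw [h1]
  have h2 : ∀ k : ℕ, k ≠ 0 → T (((k.factorial : ℝ))⁻¹ • L ^ k) = 0 := by
    intro k hk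
    have : T (((k.factorial : ℝ))⁻¹ • L ^ k) = ((k.factorial : ℝ))⁻¹ • (v ᵥ* L ^ k) :=
      T.map_smul _ _
    rw [this, vecMul_pow_eq_zero hv k hk, smul_zero]
  rw [tsum_eq_single 0 h2]
  show v ᵥ* (((Nat.factorial 0 : ℝ))⁻¹ • L ^ 0) = v
  simp

lemma vecMul_smul_mat (c : ℝ) (M : Matrix S S ℝ) (v : S → ℝ) :
    v ᵥ* (c • M) = c • (v ᵥ* M) := by
  funext y
  simp [Matrix.vecMul, dotProduct, Finset.mul_sum, mul_comm, mul_assoc, mul_left_comm]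

lemma diagonal_mulVec' (v w : S → ℝ) : (Matrix.diagonal v) *ᵥ w = fun x => v x * w x := by
  funext x
  simp [Matrix.mulVec, dotProduct, Matrix.diagonal_apply, Finset.sum_ite_eq]

theorem chainSpectral (K : Matrix S S ℝ) (μ π : S → ℝ)
    (hK : IsStochastic K) (hirr : MatIrreducible K) (hμ : IsProb μ) (hπ : IsProb π)
    (hπpos : ∀ x, 0 < π x) (hrev : Reversible K π) :
    ∃ c d : S → ℝ, (∀ i, 0 ≤ c i) ∧ (∀ i, |d i| ≤ 1) ∧ (∀ i, d i = 1 → c i = 0) ∧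
      (∀ (θ : ℝ) (m : ℕ), d2dt (θ • (1 : Matrix S S ℝ) + (1 - θ) • K) μ π m
          = Real.sqrt (∑ i, c i * ((θ + (1 - θ) * d i) ^ 2) ^ m)) ∧
      (∀ t : ℝ, d2ct (K - 1) μ π t
          = Real.sqrt (∑ i, c i * Real.exp (2 * (d i - 1) * t))) := by
  set s : S → ℝ := fun x => Real.sqrt (π x) with hs
  have hspos : ∀ x, 0 < s x := fun x => Real.sqrt_pos.mpr (hπpos x)
  have hsne : ∀ x, s x ≠ 0 := fun x => (hspos x).ne'
  set D : Matrix S S ℝ := Matrix.diagonal s with hD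
  set Dinv : Matrix S S ℝ := Matrix.diagonal (fun x => (s x)⁻¹) with hDinv
  have hDDinv : D * Dinv = 1 := by
    rw [hD, hDinv, diagonal_mul_diagonal,
      show (fun i => s i * (s i)⁻¹) = fun _ : S => (1:ℝ) from
        funext fun x => mul_inv_cancel₀ (hsne x), Matrix.diagonal_one]
  have hDinvD : Dinv * D = 1 := by
    rw [hD, hDinv, diagonal_mul_diagonal,
      show (fun i => (s i)⁻¹ * s i) = fun _ : S => (1:ℝ) from
        funext fun x => inv_mul_cancel₀ (hsne x), Matrix.diagonal_one]
  set A : Matrix S S ℝ := D * K * Dinv with hAdef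
  have hAapply : ∀ x y, A x y = s x * K x y * (s y)⁻¹ := by
    intro x y
    rw [hAdef, hD, hDinv, Matrix.mul_diagonal, Matrix.diagonal_mul]
  have hsq : ∀ x, s x * s x = π x := fun x => Real.mul_self_sqrt (hπpos x).le
  have hA : A.IsHermitian := by
    rw [Matrix.IsHermitian, Matrix.conjTranspose_eq_transpose_of_trivial]
    ext x y
    rw [Matrix.transpose_apply, hAapply x y, hAapply y x]
    have hr := hrev x y
    have hKyx : K y x = π x * K x y / π y := by
      rw [eq_div_iff (hπpos y).ne']
      linarith [hr]
    rw [hKyx, ← hsq x, ← hsq y]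
    field_simp [hsne x, hsne y]
  -- the unitary and eigenvalues
  set U : Matrix S S ℝ := (hA.eigenvectorUnitary : Matrix S S ℝ) with hUdef
  set d : S → ℝ := hA.eigenvalues with hddef
  have hUmem := hA.eigenvectorUnitary.2
  have hUUT : U * Uᵀ = 1 := by
    have h := (Matrix.mem_unitaryGroup_iff).mp hUmem
    rwa [Matrix.star_eq_conjTranspose, Matrix.conjTranspose_eq_transpose_of_trivial] at h
  have hUTU : Uᵀ * U = 1 := by
    have h := (Matrix.mem_unitaryGroup_iff').mp hUmem
    rwa [Matrix.star_eq_conjTranspose, Matrix.conjTranspose_eq_transpose_of_trivial] at h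
  have hspec : A = U * Matrix.diagonal d * Uᵀ := by
    have h := hA.spectral_theorem
    rw [Unitary.conjStarAlgAut_apply, Matrix.star_eq_conjTranspose, Matrix.conjTranspose_eq_transpose_of_trivial] at h
    simpa [RCLike.ofReal_real_eq_id] using h
  set Du : (Matrix S S ℝ)ˣ := ⟨D, Dinv, hDDinv, hDinvD⟩ with hDu
  set Uu : (Matrix S S ℝ)ˣ := ⟨U, Uᵀ, hUUT, hUTU⟩ with hUu
  set σ : S → ℝ := fun x => (μ x - π x) / s x with hσdef
  set c : S → ℝ := fun i => (σ ᵥ* U) i ^ 2 with hcdef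
  -- eigen-column facts
  have hAU : A * U = U * Matrix.diagonal d := by
    rw [hspec, Matrix.mul_assoc (U * Matrix.diagonal d) Uᵀ U, hUTU, Matrix.mul_one]
  have hcol : ∀ j, K *ᵥ (fun x => (s x)⁻¹ * U x j)
      = d j • (fun x => (s x)⁻¹ * U x j) := by
    intro j
    have hu : A *ᵥ (fun x => U x j) = d j • (fun x => U x j) := by
      funext x
      have h1 : (A *ᵥ fun x => U x j) x = (A * U) x j := by
        simp [Matrix.mulVec, dotProduct, Matrix.mul_apply]
      rw [h1, hAU, Matrix.mul_diagonal]
      simp [mul_comm]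
    have hDinvu : Dinv *ᵥ (fun x => U x j) = fun x => (s x)⁻¹ * U x j := by
      rw [hDinv, diagonal_mulVec']
    have h2 : K *ᵥ (Dinv *ᵥ fun x => U x j) = Dinv *ᵥ (A *ᵥ fun x => U x j) := by
      rw [Matrix.mulVec_mulVec, Matrix.mulVec_mulVec, hAdef]
      congr 1
      rw [← Matrix.mul_assoc, ← Matrix.mul_assoc, hDinvD, Matrix.one_mul]
    rw [← hDinvu, h2, hu, Matrix.mulVec_smul, hDinvu]
  have hcolsum : ∀ j, ∑ x, U x j * U x j = 1 := by
    intro j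
    have h := congrFun (congrFun hUTU j) j
    simpa [Matrix.mul_apply, Matrix.transpose_apply, Matrix.one_apply] using h
  have hune : ∀ j, (fun x => (s x)⁻¹ * U x j) ≠ (0 : S → ℝ) := by
    intro j hzero
    have hU0 : ∀ x, U x j = 0 := by
      intro x
      have h := congrFun hzero x
      simp only [Pi.zero_apply] at h
      exact (mul_eq_zero.mp h).resolve_left (inv_ne_zero (hsne x))
    have := hcolsum j
    simp [hU0] at this
  have habs : ∀ i, |d i| ≤ 1 := fun j => eig_abs_le_one hK (hune j) (hcol j)
  have hone : ∀ i, d i = 1 → c i = 0 := by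
    intro j hdj
    have hg : K *ᵥ (fun x => (s x)⁻¹ * U x j) = (fun x => (s x)⁻¹ * U x j) := by
      have h := hcol j; rw [hdj, one_smul] at h; exact h
    have hconst := eig_one_const hK hirr hg
    have x₀ : S := Classical.arbitrary S
    have hUxj : ∀ x, U x j = s x * ((s x₀)⁻¹ * U x₀ j) := by
      intro x
      have h := hconst x x₀
      have h2 : U x j = s x * ((s x)⁻¹ * U x j) := by
        rw [← mul_assoc, mul_inv_cancel₀ (hsne x), one_mul]
      rw [h2, h]
    have hzero : (σ ᵥ* U) j = 0 := by
      have : (σ ᵥ* U) j = ∑ x, σ x * U x j := by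
        simp [Matrix.vecMul, dotProduct]
      rw [this]
      have heach : ∀ x, σ x * U x j = (μ x - π x) * ((s x₀)⁻¹ * U x₀ j) := by
        intro x
        rw [hUxj x, hσdef]
        field_simp [hsne x, hsne x₀]
      rw [Finset.sum_congr rfl fun x _ => heach x, ← Finset.sum_mul]
      have : ∑ x, (μ x - π x) = 0 := by
        rw [Finset.sum_sub_distrib, hμ.2, hπ.2, sub_self]
      rw [this, zero_mul]
    rw [hcdef]
    simp only
    rw [hzero]
    norm_num
  -- stationarity
  have hπK : π ᵥ* K = π := by
    funext y
    show ∑ x, π x * K x y = π y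
    calc ∑ x, π x * K x y = ∑ x, π y * K y x :=
          Finset.sum_congr rfl fun x _ => hrev x y
      _ = π y := by rw [← Finset.mul_sum, hK.2 y, mul_one]
  -- generic conjugation of affine combinations
  have hconjaff : ∀ (P Q X Y : Matrix S S ℝ) (a b : ℝ),
      P * (a • X + b • Y) * Q = a • (P * X * Q) + b • (P * Y * Q) := by
    intro P Q X Y a b
    rw [Matrix.mul_add, Matrix.add_mul, Matrix.mul_smul, Matrix.mul_smul,
      Matrix.smul_mul, Matrix.smul_mul]
  refine ⟨c, d, fun i => sq_nonneg _, habs, hone, ?_, ?_⟩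
  · -- discrete time formula
    intro θ m
    set Kθ : Matrix S S ℝ := θ • (1 : Matrix S S ℝ) + (1 - θ) • K with hKθ
    have hdiagθ : Matrix.diagonal (fun i => θ + (1 - θ) * d i)
        = θ • (1 : Matrix S S ℝ) + (1 - θ) • Matrix.diagonal d := by
      ext i k
      by_cases h : i = k <;>
        simp [Matrix.diagonal_apply, Matrix.one_apply, Matrix.add_apply,
          Matrix.smul_apply, h, smul_eq_mul]
    have hlazy : D * Kθ * Dinv = U * Matrix.diagonal (fun i => θ + (1 - θ) * d i) * Uᵀ := by
      rw [hKθ, hconjaff, hdiagθ, hconjaff, Matrix.mul_one, hDDinv, ← hspec, ← hAdef,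
        Matrix.mul_one, hUUT]
    have hMpow : D * Kθ ^ m * Dinv
        = U * Matrix.diagonal (fun i => (θ + (1 - θ) * d i) ^ m) * Uᵀ := by
      have hDuinv : ((Du⁻¹ : (Matrix S S ℝ)ˣ) : Matrix S S ℝ) = Dinv := rfl
      have h1 := Units.conj_pow Du Kθ m
      rw [show (Du : Matrix S S ℝ) = D from rfl, hDuinv] at h1
      have hUuinv : ((Uu⁻¹ : (Matrix S S ℝ)ˣ) : Matrix S S ℝ) = Uᵀ := rfl
      have h2 := Units.conj_pow Uu (Matrix.diagonal (fun i => θ + (1 - θ) * d i)) m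
      rw [show (Uu : Matrix S S ℝ) = U from rfl, hUuinv] at h2
      rw [← h1, hlazy, h2, Matrix.diagonal_pow]
      rfl
    have hπKθ : π ᵥ* Kθ = π := by
      rw [hKθ, vecMul_add, vecMul_smul_mat, vecMul_smul_mat, vecMul_one, hπK]
      funext y
      simp only [Pi.add_apply, Pi.smul_apply, smul_eq_mul]
      ring
    have hπKθm : π ᵥ* Kθ ^ m = π := by
      clear hMpow
      induction m with
      | zero => simp
      | succ k ih => rw [pow_succ, ← vecMul_vecMul, ih, hπKθ]
    unfold d2dt
    rw [master_formula π μ hπpos U hUUT (Kθ ^ m) (fun i => (θ + (1 - θ) * d i) ^ m)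
      hMpow hπKθm]
    congr 1
    refine Finset.sum_congr rfl fun i _ => ?_
    rw [hcdef]
    simp only
    rw [← pow_mul, ← pow_mul, Nat.mul_comm]
  · -- continuous time formula
    intro t
    have hgen : π ᵥ* (t • (K - 1)) = 0 := by
      rw [vecMul_smul_mat, vecMul_sub, hπK, vecMul_one, sub_self, smul_zero]
    have hπM := vecMul_exp_of_eq_zero (t • (K - 1)) π hgen
    have e1 : D * (t • (K - 1)) * Dinv = t • (A - 1) := by
      rw [Matrix.mul_smul, Matrix.smul_mul]
      congr 1
      rw [Matrix.mul_sub, Matrix.mul_one, Matrix.sub_mul, hDDinv, hAdef]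
    have e3 : t • (A - 1) = U * Matrix.diagonal (fun i => t * (d i - 1)) * Uᵀ := by
      have hd1 : Matrix.diagonal (fun i => t * (d i - 1))
          = t • (Matrix.diagonal d - 1) := by
        ext i k
        by_cases h : i = k <;>
          simp [Matrix.diagonal_apply, Matrix.one_apply, Matrix.sub_apply,
            Matrix.smul_apply, h, smul_eq_mul]
      rw [hd1, Matrix.mul_smul, Matrix.smul_mul]
      congr 1
      rw [Matrix.mul_sub, Matrix.sub_mul, Matrix.mul_one, hUUT, ← hspec]
    have e2 := Matrix.exp_units_conj Du (t • (K - 1))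
    have hDuval : (Du : Matrix S S ℝ) = D := rfl
    have hDuinv : ((Du⁻¹ : (Matrix S S ℝ)ˣ) : Matrix S S ℝ) = Dinv := rfl
    rw [hDuval, hDuinv, e1, e3] at e2
    have e4 := Matrix.exp_units_conj Uu (Matrix.diagonal (fun i => t * (d i - 1)))
    have hUuval : (Uu : Matrix S S ℝ) = U := rfl
    have hUuinv : ((Uu⁻¹ : (Matrix S S ℝ)ˣ) : Matrix S S ℝ) = Uᵀ := rfl
    rw [hUuval, hUuinv, Matrix.exp_diagonal] at e4
    have e5 : NormedSpace.exp (fun i => t * (d i - 1))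
        = fun i => Real.exp (t * (d i - 1)) := by
      rw [Pi.exp_def]
      funext i
      rw [Real.exp_eq_exp_ℝ]
    rw [e5] at e4
    have hconj : D * NormedSpace.exp (t • (K - 1)) * Dinv
        = U * Matrix.diagonal (fun i => Real.exp (t * (d i - 1))) * Uᵀ := by
      rw [← e2, e4]
    unfold d2ct
    rw [master_formula π μ hπpos U hUUT (NormedSpace.exp (t • (K - 1)))
      (fun i => Real.exp (t * (d i - 1))) hconj hπM]
    congr 1
    refine Finset.sum_congr rfl fun i _ => ?_
    congr 1
    rw [← Real.exp_nat_mul]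
    congr 1
    push_cast
    ring

theorem chainBounds {S : Type*} [Fintype S] [DecidableEq S] [Nonempty S]
    (K : Matrix S S ℝ) (μ π : S → ℝ)
    (hK : IsStochastic K) (hirr : MatIrreducible K) (hμ : IsProb μ) (hπ : IsProb π)
    (hπpos : ∀ x, 0 < π x) (hrev : Reversible K π)
    (θ : ℝ) (hθ : 1 / 2 < θ) (hθ1 : θ < 1) (ε : ℝ) (hε : 0 < ε) :
    (d2dt (θ • (1 : Matrix S S ℝ) + (1 - θ) • K) μ π
        (Tmix2dt (θ • (1 : Matrix S S ℝ) + (1 - θ) • K) μ π ε) ≤ ε) ∧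
    (∀ m m' : ℕ, m ≤ m' →
      d2dt (θ • (1 : Matrix S S ℝ) + (1 - θ) • K) μ π m'
        ≤ d2dt (θ • (1 : Matrix S S ℝ) + (1 - θ) • K) μ π m) ∧
    (0 ≤ Tmix2ct (K - 1) μ π ε) ∧
    (Tmix2ct (K - 1) μ π ε
      ≤ (-Real.log (2 * θ - 1) / 2) * (Tmix2dt (θ • (1 : Matrix S S ℝ) + (1 - θ) • K) μ π ε)) ∧
    ((1 - θ) * ((Tmix2dt (θ • (1 : Matrix S S ℝ) + (1 - θ) • K) μ π ε : ℝ) - 1)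
      ≤ Tmix2ct (K - 1) μ π ε) := by
  obtain ⟨c, d, hc, habs, hone, hfd, hfc⟩ :=
    chainSpectral K μ π hK hirr hμ hπ hπpos hrev
  have hθ0 : 0 < 1 - θ := by linarith
  have hq0 : 0 < 2 * θ - 1 := by linarith
  have hq1 : 2 * θ - 1 < 1 := by linarith
  set q : ℝ := 2 * θ - 1 with hqdef
  set cθ : ℝ := -Real.log (2 * θ - 1) / 2 with hcθdef
  have hlogq : Real.log q < 0 := Real.log_neg hq0 hq1
  have hcθ : 0 < cθ := by rw [hcθdef, ← hqdef]; linarith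
  set β : S → ℝ := fun i => θ + (1 - θ) * d i with hβdef
  have hβlb : ∀ i, q ≤ β i := by
    intro i
    have := (abs_le.mp (habs i)).1
    rw [hβdef, hqdef]; simp only; nlinarith
  have hβub : ∀ i, β i ≤ 1 := by
    intro i
    have := (abs_le.mp (habs i)).2
    rw [hβdef]; simp only; nlinarith
  have hβpos : ∀ i, 0 < β i := fun i => lt_of_lt_of_le hq0 (hβlb i)
  -- termwise inequality 1 : β ≤ exp((1-θ)(d-1))
  have hkey1 : ∀ i, β i ≤ Real.exp ((1 - θ) * (d i - 1)) := by
    intro i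
    have h := Real.add_one_le_exp ((1 - θ) * (d i - 1))
    rw [hβdef]; simp only; nlinarith
  -- termwise inequality 2 : exp(cθ(d-1)) ≤ β  (convexity of exp)
  have hkey2 : ∀ i, Real.exp ((d i - 1) * cθ) ≤ β i := by
    intro i
    set a : ℝ := (1 - d i) / 2 with hadef
    have ha0 : 0 ≤ a := by
      have := (abs_le.mp (habs i)).2
      rw [hadef]; linarith
    have ha1 : a ≤ 1 := by
      have := (abs_le.mp (habs i)).1
      rw [hadef]; linarith
    have harg : (d i - 1) * cθ = a * Real.log q := by
      rw [hadef, hcθdef, ← hqdef]; ring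
    have hconv := convexOn_exp.2 (Set.mem_univ (0 : ℝ)) (Set.mem_univ (Real.log q))
      (by linarith : (0:ℝ) ≤ 1 - a) ha0 (by ring)
    simp only [smul_eq_mul, mul_zero, zero_add, Real.exp_zero, mul_one] at hconv
    rw [harg]
    calc Real.exp (a * Real.log q) ≤ (1 - a) + a * Real.exp (Real.log q) := hconv
      _ = 1 - a * (1 - q) := by rw [Real.exp_log hq0]; ring
      _ = β i := by rw [hβdef, hadef, hqdef]; ring
  have e2 : ∀ a : ℝ, Real.exp a ^ 2 = Real.exp (2 * a) := fun a => by
    rw [sq, ← Real.exp_add]; ring_nf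
  have epm : ∀ (a : ℝ) (m : ℕ), Real.exp a ^ m = Real.exp (m * a) := fun a m =>
    (Real.exp_nat_mul a m).symm
  -- sum comparisons
  have hsum_le : ∀ (f g : S → ℝ), (∀ i, f i ≤ g i) →
      Real.sqrt (∑ i, c i * f i) ≤ Real.sqrt (∑ i, c i * g i) := by
    intro f g h
    exact Real.sqrt_le_sqrt (Finset.sum_le_sum fun i _ =>
      mul_le_mul_of_nonneg_left (h i) (hc i))
  -- comparison 1 : d2dt m ≤ d2ct ((1-θ) m)
  have hcmp1 : ∀ m : ℕ, d2dt (θ • (1 : Matrix S S ℝ) + (1 - θ) • K) μ π m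
      ≤ d2ct (K - 1) μ π ((1 - θ) * m) := by
    intro m
    rw [hfd θ m, hfc ((1 - θ) * m)]
    refine hsum_le _ _ fun i => ?_
    have h1 : (β i ^ 2) ^ m ≤ (Real.exp ((1 - θ) * (d i - 1)) ^ 2) ^ m := by
      refine pow_le_pow_left₀ (sq_nonneg _) ?_ m
      exact pow_le_pow_left₀ (hβpos i).le (hkey1 i) 2
    calc (β i ^ 2) ^ m ≤ (Real.exp ((1 - θ) * (d i - 1)) ^ 2) ^ m := h1
      _ = Real.exp (2 * (d i - 1) * ((1 - θ) * m)) := by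
          rw [e2, epm]
          congr 1
          push_cast
          ring
  -- comparison 2 : d2ct (cθ m) ≤ d2dt m
  have hcmp2 : ∀ m : ℕ, d2ct (K - 1) μ π (cθ * m)
      ≤ d2dt (θ • (1 : Matrix S S ℝ) + (1 - θ) • K) μ π m := by
    intro m
    rw [hfd θ m, hfc (cθ * m)]
    refine hsum_le _ _ fun i => ?_
    have h1 : Real.exp ((d i - 1) * cθ) ^ 2 ≤ β i ^ 2 :=
      pow_le_pow_left₀ (Real.exp_pos _).le (hkey2 i) 2
    calc Real.exp (2 * (d i - 1) * (cθ * m))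
        = (Real.exp ((d i - 1) * cθ) ^ 2) ^ m := by
          rw [e2, epm]
          congr 1
          push_cast
          ring
      _ ≤ (β i ^ 2) ^ m := pow_le_pow_left₀ (sq_nonneg _) h1 m
  -- monotonicity
  have hmono_dt : ∀ m m' : ℕ, m ≤ m' →
      d2dt (θ • (1 : Matrix S S ℝ) + (1 - θ) • K) μ π m'
        ≤ d2dt (θ • (1 : Matrix S S ℝ) + (1 - θ) • K) μ π m := by
    intro m m' hmm
    rw [hfd θ m, hfd θ m']
    refine hsum_le _ _ fun i => ?_
    refine pow_le_pow_of_le_one (sq_nonneg _) ?_ hmm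
    calc β i ^ 2 ≤ 1 ^ 2 := pow_le_pow_left₀ (hβpos i).le (hβub i) 2
      _ = 1 := one_pow 2
  have hmono_ct : ∀ t t' : ℝ, t ≤ t' →
      d2ct (K - 1) μ π t' ≤ d2ct (K - 1) μ π t := by
    intro t t' htt
    rw [hfc t, hfc t']
    refine hsum_le _ _ fun i => ?_
    refine Real.exp_le_exp.mpr ?_
    have hd1 : d i - 1 ≤ 0 := by have := (abs_le.mp (habs i)).2; linarith
    nlinarith
  -- tendsto 0
  have hto0_dt : Tendsto (fun m => d2dt (θ • (1 : Matrix S S ℝ) + (1 - θ) • K) μ π m)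
      atTop (𝓝 0) := by
    have hsum : Tendsto (fun m : ℕ => ∑ i, c i * (β i ^ 2) ^ m) atTop (𝓝 0) := by
      have : Tendsto (fun m : ℕ => ∑ i, c i * (β i ^ 2) ^ m) atTop
          (𝓝 (∑ i : S, (0:ℝ))) := by
        refine tendsto_finset_sum _ fun i _ => ?_
        by_cases hci : c i = 0
        · simpa [hci] using tendsto_const_nhds
        · have hd1 : d i < 1 := by
            rcases lt_or_eq_of_le (abs_le.mp (habs i)).2 with h | h
            · exact h
            · exact absurd (hone i h) hci
          have hb1 : β i < 1 := by rw [hβdef]; simp only; nlinarith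
          have hb2 : β i ^ 2 < 1 := by nlinarith [hβpos i]
          have := tendsto_pow_atTop_nhds_zero_of_lt_one (sq_nonneg (β i)) hb2
          simpa using this.const_mul (c i)
      simpa using this
    have : Tendsto (fun m : ℕ => Real.sqrt (∑ i, c i * (β i ^ 2) ^ m)) atTop
        (𝓝 (Real.sqrt 0)) := (Real.continuous_sqrt.tendsto 0).comp hsum
    rw [Real.sqrt_zero] at this
    refine this.congr fun m => ?_
    rw [hfd θ m]
  have hto0_ct : Tendsto (fun t => d2ct (K - 1) μ π t) atTop (𝓝 0) := by
    have hsum : Tendsto (fun t : ℝ => ∑ i, c i * Real.exp (2 * (d i - 1) * t)) atTop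
        (𝓝 0) := by
      have : Tendsto (fun t : ℝ => ∑ i, c i * Real.exp (2 * (d i - 1) * t)) atTop
          (𝓝 (∑ i : S, (0:ℝ))) := by
        refine tendsto_finset_sum _ fun i _ => ?_
        by_cases hci : c i = 0
        · simpa [hci] using tendsto_const_nhds
        · have hd1 : d i < 1 := by
            rcases lt_or_eq_of_le (abs_le.mp (habs i)).2 with h | h
            · exact h
            · exact absurd (hone i h) hci
          have hcoef : 2 * (d i - 1) < 0 := by linarith
          have harg : Tendsto (fun t : ℝ => 2 * (d i - 1) * t) atTop atBot :=
            tendsto_id.const_mul_atTop_of_neg hcoef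
          have := Real.tendsto_exp_atBot.comp harg
          simpa using this.const_mul (c i)
      simpa using this
    have : Tendsto (fun t : ℝ => Real.sqrt (∑ i, c i * Real.exp (2 * (d i - 1) * t)))
        atTop (𝓝 (Real.sqrt 0)) := (Real.continuous_sqrt.tendsto 0).comp hsum
    rw [Real.sqrt_zero] at this
    refine this.congr fun t => ?_
    rw [hfc t]
  have hcont_ct : Continuous (fun t => d2ct (K - 1) μ π t) := by
    have : (fun t => d2ct (K - 1) μ π t)
        = fun t => Real.sqrt (∑ i, c i * Real.exp (2 * (d i - 1) * t)) := by
      funext t; rw [hfc t]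
    rw [this]
    refine Real.continuous_sqrt.comp ?_
    refine continuous_finset_sum _ fun i _ => ?_
    exact continuous_const.mul (Real.continuous_exp.comp (continuous_const.mul continuous_id))
  -- the discrete mixing set
  have hSdtne : {m : ℕ | d2dt (θ • (1 : Matrix S S ℝ) + (1 - θ) • K) μ π m ≤ ε}.Nonempty := by
    obtain ⟨m, hm⟩ := (hto0_dt.eventually (gt_mem_nhds hε)).exists
    exact ⟨m, hm.le⟩
  set Tdt : ℕ := Tmix2dt (θ • (1 : Matrix S S ℝ) + (1 - θ) • K) μ π ε with hTdtdef
  have hTdt_mem : d2dt (θ • (1 : Matrix S S ℝ) + (1 - θ) • K) μ π Tdt ≤ ε :=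
    Nat.sInf_mem hSdtne
  have hTdt_min : ∀ m, d2dt (θ • (1 : Matrix S S ℝ) + (1 - θ) • K) μ π m ≤ ε → Tdt ≤ m :=
    fun m hm => Nat.sInf_le hm
  -- the continuous mixing set
  set Sct : Set ℝ := {t : ℝ | 0 ≤ t ∧ d2ct (K - 1) μ π t ≤ ε} with hSctdef
  have hSctne : Sct.Nonempty := by
    obtain ⟨a, ha⟩ := (hto0_ct.eventually (gt_mem_nhds hε)).exists_forall_of_atTop
    exact ⟨max a 0, le_max_right a 0, (ha (max a 0) (le_max_left a 0)).le⟩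
  have hSctclosed : IsClosed Sct := by
    rw [hSctdef, Set.setOf_and]
    exact (isClosed_le continuous_const continuous_id).inter
      (isClosed_le hcont_ct continuous_const)
  have hSctbdd : BddBelow Sct := ⟨0, fun x hx => hx.1⟩
  have hTct_mem : Tmix2ct (K - 1) μ π ε ∈ Sct := hSctclosed.csInf_mem hSctne hSctbdd
  have hTct_nonneg : 0 ≤ Tmix2ct (K - 1) μ π ε := hTct_mem.1
  refine ⟨hTdt_mem, hmono_dt, hTct_nonneg, ?_, ?_⟩
  · -- A1 : Tct ≤ cθ * Tdt
    refine csInf_le hSctbdd ⟨by positivity, ?_⟩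
    calc d2ct (K - 1) μ π (cθ * Tdt)
        ≤ d2dt (θ • (1 : Matrix S S ℝ) + (1 - θ) • K) μ π Tdt := hcmp2 Tdt
      _ ≤ ε := hTdt_mem
  · -- A2 : (1-θ)(Tdt - 1) ≤ Tct
    set Tct : ℝ := Tmix2ct (K - 1) μ π ε with hTctdef
    set m₀ : ℕ := ⌈Tct / (1 - θ)⌉₊ with hm₀def
    have hm₀ : Tct ≤ (1 - θ) * m₀ := by
      have h := Nat.le_ceil (Tct / (1 - θ))
      rw [← hm₀def] at h
      calc Tct = (1 - θ) * (Tct / (1 - θ)) := by field_simp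
        _ ≤ (1 - θ) * m₀ := by
            exact mul_le_mul_of_nonneg_left h hθ0.le
    have hdm₀ : d2dt (θ • (1 : Matrix S S ℝ) + (1 - θ) • K) μ π m₀ ≤ ε := by
      calc d2dt (θ • (1 : Matrix S S ℝ) + (1 - θ) • K) μ π m₀
          ≤ d2ct (K - 1) μ π ((1 - θ) * m₀) := hcmp1 m₀
        _ ≤ d2ct (K - 1) μ π Tct := hmono_ct _ _ hm₀
        _ ≤ ε := hTct_mem.2
    have hTdtm₀ : Tdt ≤ m₀ := hTdt_min m₀ hdm₀
    have hceil : (m₀ : ℝ) < Tct / (1 - θ) + 1 :=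
      Nat.ceil_lt_add_one (by positivity)
    have h1 : (Tdt : ℝ) ≤ Tct / (1 - θ) + 1 :=
      le_trans (Nat.cast_le.mpr hTdtm₀) hceil.le
    have h2 : (Tdt : ℝ) - 1 ≤ Tct / (1 - θ) := by linarith
    calc (1 - θ) * ((Tdt : ℝ) - 1) ≤ (1 - θ) * (Tct / (1 - θ)) :=
          mul_le_mul_of_nonneg_left h2 hθ0.le
      _ = Tct := by field_simp

end AuxiliaryChainLemmas

open scoped ENNReal

theorem stmt_15 (S : ℕ → Type) [∀ n, Fintype (S n)] [∀ n, DecidableEq (S n)]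
    [∀ n, Nonempty (S n)]
    (K : ∀ n, Matrix (S n) (S n) ℝ) (μ π : ∀ n, S n → ℝ)
    (hK : ∀ n, IsStochastic (K n)) (hirr : ∀ n, MatIrreducible (K n))
    (hμ : ∀ n, IsProb (μ n)) (hπ : ∀ n, IsProb (π n)) (hπpos : ∀ n x, 0 < π n x)
    (hrev : ∀ n, Reversible (K n) (π n))
    (θ : ℝ) (hθ : 1 / 2 < θ) (hθ1 : θ < 1)
    -- `π_n(|μ_n/π_n|²) → ∞`
    (hdiv : Tendsto (fun n => ∑ x, (μ n x) ^ 2 / π n x) atTop atTop)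
    -- both the continuous-time family and the `θ`-lazy family have `L²`-cutoffs
    (hcutC : HasCutoffCT (fun n t => d2ct (K n - 1) (μ n) (π n) t))
    (hcutθ : HasCutoffDT (fun n m =>
      d2dt (θ • (1 : Matrix (S n) (S n) ℝ) + (1 - θ) • K n) (μ n) (π n) m))
    -- for some `ε₀ > 0`, `T^{(c)}_{n,2}(μ_n,ε₀) → ∞` or `T^{(θ)}_{n,2}(μ_n,ε₀) → ∞`
    (hmix : ∃ ε₀ > (0 : ℝ),
      Tendsto (fun n => Tmix2ct (K n - 1) (μ n) (π n) ε₀) atTop atTop ∨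
      Tendsto (fun n =>
        (Tmix2dt (θ • (1 : Matrix (S n) (S n) ℝ) + (1 - θ) • K n) (μ n) (π n) ε₀ : ℝ))
        atTop atTop) :
    ∀ ε > (0 : ℝ),
      ENNReal.ofReal (1 - θ) ≤
        Filter.liminf (fun n => ENNReal.ofReal (Tmix2ct (K n - 1) (μ n) (π n) ε /
          (Tmix2dt (θ • (1 : Matrix (S n) (S n) ℝ) + (1 - θ) • K n) (μ n) (π n) ε : ℝ)))
          atTop ∧
      Filter.limsup (fun n => ENNReal.ofReal (Tmix2ct (K n - 1) (μ n) (π n) ε /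
          (Tmix2dt (θ • (1 : Matrix (S n) (S n) ℝ) + (1 - θ) • K n) (μ n) (π n) ε : ℝ)))
          atTop ≤
        ENNReal.ofReal (-Real.log (2 * θ - 1) / 2) := by
  intro ε hε
  obtain ⟨ε₀, hε₀, hmix'⟩ := hmix
  have hθ0 : 0 < 1 - θ := by linarith
  have hq0 : 0 < 2 * θ - 1 := by linarith
  have hq1 : 2 * θ - 1 < 1 := by linarith
  have hlogq : Real.log (2 * θ - 1) < 0 := Real.log_neg hq0 hq1
  set cθ : ℝ := -Real.log (2 * θ - 1) / 2 with hcθdef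
  have hcθpos : 0 < cθ := by rw [hcθdef]; linarith
  have hB := fun (n : ℕ) (ε' : ℝ) (hε' : 0 < ε') =>
    chainBounds (K n) (μ n) (π n) (hK n) (hirr n) (hμ n) (hπ n) (hπpos n) (hrev n)
      θ hθ hθ1 ε' hε'
  set Tc : ℕ → ℝ := fun n => Tmix2ct (K n - 1) (μ n) (π n) ε with hTcdef
  set Tθ : ℕ → ℕ := fun n =>
    Tmix2dt (θ • (1 : Matrix (S n) (S n) ℝ) + (1 - θ) • K n) (μ n) (π n) ε with hTθdef
  set Tθ₀ : ℕ → ℕ := fun n =>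
    Tmix2dt (θ • (1 : Matrix (S n) (S n) ℝ) + (1 - θ) • K n) (μ n) (π n) ε₀ with hTθ₀def
  -- step 1 : Tθ₀ → ∞
  have hTth0 : Tendsto (fun n => (Tθ₀ n : ℝ)) atTop atTop := by
    rcases hmix' with h | h
    · have hle : ∀ n, Tmix2ct (K n - 1) (μ n) (π n) ε₀ ≤ cθ * Tθ₀ n :=
        fun n => (hB n ε₀ hε₀).2.2.2.1
      have hdiv' : Tendsto (fun n => Tmix2ct (K n - 1) (μ n) (π n) ε₀ / cθ) atTop atTop :=
        h.atTop_div_const hcθpos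
      refine tendsto_atTop_mono (fun n => ?_) hdiv'
      rw [div_le_iff₀ hcθpos]
      linarith [hle n]
    · exact h
  -- step 2 : cutoff times → ∞
  obtain ⟨t, htpos, hcut⟩ := hcutθ
  obtain ⟨h0, hinf⟩ := hcut (1/2) (by norm_num)
  have htinf : Tendsto t atTop atTop := by
    have hev : ∀ᶠ n in atTop,
        d2dt (θ • (1 : Matrix (S n) (S n) ℝ) + (1 - θ) • K n) (μ n) (π n)
          ⌈(1 + 1/2) * t n⌉₊ < ε₀ := h0.eventually (gt_mem_nhds hε₀)
    have hlo : Tendsto (fun n => ((Tθ₀ n : ℝ) - 1) * (2/3)) atTop atTop :=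
      (tendsto_atTop_add_const_right atTop (-1) hTth0).atTop_mul_const (by norm_num)
    refine tendsto_atTop_mono' atTop ?_ hlo
    filter_upwards [hev, htpos] with n h1 h2
    have hmem : Tθ₀ n ≤ ⌈(1 + 1/2) * t n⌉₊ := Nat.sInf_le h1.le
    have hceil : (⌈(1 + 1/2) * t n⌉₊ : ℝ) < (1 + 1/2) * t n + 1 :=
      Nat.ceil_lt_add_one (by positivity)
    have : (Tθ₀ n : ℝ) ≤ (1 + 1/2) * t n + 1 :=
      le_trans (Nat.cast_le.mpr hmem) hceil.le
    nlinarith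
  -- step 3 : Tθ → ∞
  have hTthE : Tendsto (fun n => (Tθ n : ℝ)) atTop atTop := by
    have hev2 : ∀ᶠ n in atTop, ε <
        d2dt (θ • (1 : Matrix (S n) (S n) ℝ) + (1 - θ) • K n) (μ n) (π n)
          ⌊(1 - 1/2) * t n⌋₊ := hinf.eventually_gt_atTop ε
    have hlo : Tendsto (fun n => (1/2 : ℝ) * t n) atTop atTop :=
      htinf.const_mul_atTop (by norm_num)
    refine tendsto_atTop_mono' atTop ?_ hlo
    filter_upwards [hev2, htpos] with n h1 h2
    have hnot : ¬ (Tθ n ≤ ⌊(1 - 1/2) * t n⌋₊) := by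
      intro hle
      have hmono := (hB n ε hε).2.1 (Tθ n) ⌊(1 - 1/2) * t n⌋₊ hle
      have hmem := (hB n ε hε).1
      exact absurd (le_trans hmono hmem) (not_le.mpr h1)
    push_neg at hnot
    have hfl : ((1 : ℝ) - 1/2) * t n < (⌊(1 - 1/2) * t n⌋₊ : ℝ) + 1 :=
      Nat.lt_floor_add_one _
    have hTn : ((⌊(1 - 1/2) * t n⌋₊ : ℕ) : ℝ) + 1 ≤ (Tθ n : ℝ) := by
      exact_mod_cast Nat.succ_le_of_lt hnot
    nlinarith
  -- step 4 : conclusion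
  constructor
  · -- liminf bound
    set f : ℕ → ℝ≥0∞ := fun n => ENNReal.ofReal (Tc n / (Tθ n : ℝ)) with hfdef
    set g : ℕ → ℝ≥0∞ := fun n =>
      ENNReal.ofReal ((1 - θ) * (1 - ((Tθ n : ℝ))⁻¹)) with hgdef
    have hg : Tendsto g atTop (𝓝 (ENNReal.ofReal (1 - θ))) := by
      have hr : Tendsto (fun n => (1 - θ) * (1 - ((Tθ n : ℝ))⁻¹)) atTop
          (𝓝 ((1 - θ) * (1 - 0))) :=
        tendsto_const_nhds.mul (tendsto_const_nhds.sub hTthE.inv_tendsto_atTop)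
      have := (ENNReal.continuous_ofReal.tendsto _).comp hr
      rw [sub_zero, mul_one] at this
      exact this
    have hle : ∀ᶠ n in atTop, g n ≤ f n := by
      filter_upwards [hTthE.eventually_ge_atTop 1] with n h1
      have hpos : (0 : ℝ) < (Tθ n : ℝ) := by linarith
      have hA2 : (1 - θ) * ((Tθ n : ℝ) - 1) ≤ Tc n := (hB n ε hε).2.2.2.2
      have heq : (1 - θ) * ((Tθ n : ℝ) - 1) / (Tθ n : ℝ)
          = (1 - θ) * (1 - ((Tθ n : ℝ))⁻¹) := by
        field_simp
      have hdiv2 : (1 - θ) * ((Tθ n : ℝ) - 1) / (Tθ n : ℝ) ≤ Tc n / (Tθ n : ℝ) := by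
        gcongr
      rw [heq] at hdiv2
      exact ENNReal.ofReal_le_ofReal hdiv2
    calc ENNReal.ofReal (1 - θ) = liminf g atTop := hg.liminf_eq.symm
      _ ≤ liminf f atTop := liminf_le_liminf hle
  · -- limsup bound
    have hle : ∀ n, ENNReal.ofReal (Tc n / (Tθ n : ℝ)) ≤ ENNReal.ofReal cθ := by
      intro n
      by_cases hz : (Tθ n : ℝ) = 0
      · simp [hz]
      · have hpos : (0 : ℝ) < (Tθ n : ℝ) :=
          lt_of_le_of_ne (Nat.cast_nonneg _) (Ne.symm hz)
        have h1 : Tc n ≤ cθ * Tθ n := (hB n ε hε).2.2.2.1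
        have : Tc n / (Tθ n : ℝ) ≤ cθ := by
          rw [div_le_iff₀ hpos]
          linarith
        exact ENNReal.ofReal_le_ofReal this
    exact limsup_le_of_le (by isBoundedDefault) (Eventually.of_forall hle)
end
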